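/- arXiv:2101.12060 — 6 statements merged into one kernel-verified Lean document; each statement's English description precedes it below -/
import Mathlib

section
/- For all n ≥ 1, the number of regions of the threshold arrangement, given by 2(a(n) − n·a(n−1)) where a(n) is the n-th ordered Bell number, equals the sum over k from 1 to n−1 of 2^k·(n−k)·A(n−1,k−1), where A(m,j) denotes the Eulerian number counting permutations of [m] with j descents. -/
open Finset

/-- Stirling numbers of the second kind. -/
def stirling : ℕ → ℕ → ℕ
  | 0, 0 => 1
  | 0, _ + 1 => 0
  | _ + 1, 0 => 0
  | n + 1, k + 1 => (k + 1) * stirling n (k + 1) + stirling n k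

/-- The ordered Bell (Fubini) numbers. -/
def fubini (n : ℕ) : ℕ := ∑ k ∈ Finset.range (n + 1), k.factorial * stirling n k

/-- Eulerian numbers `A(n,k)`: permutations of `[n]` with `k` descents. -/
def eulerian : ℕ → ℕ → ℕ
  | 0, 0 => 1
  | 0, _ + 1 => 0
  | _ + 1, 0 => 1
  | n + 1, k + 1 => (n + 1 - (k + 1)) * eulerian n k + (k + 2) * eulerian n (k + 1)

/-- `L` is an ordered set partition of `Fin n`: a list of nonempty, pairwise
disjoint blocks whose union is everything. -/
def IsOSP {n : ℕ} (L : List (Finset (Fin n))) : Prop :=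
  (∀ B ∈ L, B.Nonempty) ∧ L.Pairwise Disjoint ∧ ∀ x : Fin n, ∃ B ∈ L, x ∈ B

lemma stirling_eq_zero : ∀ n k : ℕ, n < k → stirling n k = 0 := by
  intro n
  induction n with
  | zero => intro k hk; cases k with
    | zero => omega
    | succ k => rfl
  | succ n ih =>
    intro k hk
    cases k with
    | zero => omega
    | succ k =>
      show (k + 1) * stirling n (k + 1) + stirling n k = 0
      rw [ih (k+1) (by omega), ih k (by omega)]
      simp

lemma eulerian_succ_eq_zero : ∀ n k : ℕ, n ≤ k → eulerian (n+1) (k+1) = 0 := by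
  intro n
  induction n with
  | zero =>
    intro k hk
    show (1 - (k+1)) * eulerian 0 k + (k + 2) * eulerian 0 (k+1) = 0
    have : eulerian 0 (k+1) = 0 := rfl
    rw [this, Nat.sub_eq_zero_of_le (by omega)]
    simp
  | succ n ih =>
    intro k hk
    cases k with
    | zero => omega
    | succ k =>
      show (n + 2 - (k+2)) * eulerian (n+1) (k+1) + (k + 3) * eulerian (n+1) (k+2) = 0
      rw [ih (k+1) (by omega), Nat.sub_eq_zero_of_le (by omega)]
      simp

lemma eulerian_self_succ (n : ℕ) : eulerian n (n+1) = 0 := by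
  cases n with
  | zero => rfl
  | succ n => exact eulerian_succ_eq_zero n (n+1) (by omega)

lemma key_choose (n m j : ℕ) (hj : j ≤ n) (hm : m ≤ n) :
    (n - j) * (j+1).choose m + (j + 1) * j.choose m = (n + 1 - m) * (j+1).choose m := by
  rcases le_or_gt m (j+1) with h | h
  · have h1 : j.choose m * (j + 1) = (j+1).choose m * (j + 1 - m) := Nat.choose_mul_succ_eq j m
    have h2 : (j + 1) * j.choose m = (j + 1 - m) * (j+1).choose m := by
      rw [mul_comm, h1, mul_comm]
    rw [h2, ← add_mul]
    congr 1
    omega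
  · rw [Nat.choose_eq_zero_of_lt h, Nat.choose_eq_zero_of_lt (by omega)]
    simp

lemma eulerian_zero_right (n : ℕ) : eulerian n 0 = 1 := by
  cases n <;> rfl

lemma rhs_eq (n m : ℕ) (hm : m ≤ n) :
    ∑ j ∈ range (n+2), eulerian (n+1) j * j.choose m
      = (n + 1 - m) * ∑ j ∈ range (n+1), eulerian n j * (j+1).choose m := by
  rw [Finset.sum_range_succ']
  have h0 : eulerian (n+1) 0 * Nat.choose 0 m = Nat.choose 0 m := by
    show 1 * _ = _; ring
  rw [h0]
  have hrec : ∀ j ∈ range (n+1), eulerian (n+1) (j+1) * (j+1).choose m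
      = (n - j) * (eulerian n j * (j+1).choose m)
        + ((j+1) * (eulerian n (j+1) * (j+1).choose m) + eulerian n (j+1) * (j+1).choose m) := by
    intro j hj
    show ((n + 1 - (j + 1)) * eulerian n j + (j + 2) * eulerian n (j+1)) * (j+1).choose m = _
    have h : n + 1 - (j + 1) = n - j := by omega
    rw [h]; ring
  rw [Finset.sum_congr rfl hrec, Finset.sum_add_distrib, Finset.sum_add_distrib]
  set g : ℕ → ℕ := fun i => (i+1) * (eulerian n i * i.choose m) with hg
  have hmid : (∑ j ∈ range (n+1), (j+1) * (eulerian n (j+1) * (j+1).choose m))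
      + (∑ j ∈ range (n+1), eulerian n (j+1) * (j+1).choose m)
      + Nat.choose 0 m = ∑ j ∈ range (n+1), g j := by
    have e1 : ∑ i ∈ range (n+2), g i = (∑ j ∈ range (n+1), g (j+1)) + g 0 :=
      Finset.sum_range_succ' g (n+1)
    have e2 : ∑ i ∈ range (n+2), g i = (∑ j ∈ range (n+1), g j) + g (n+1) :=
      Finset.sum_range_succ g (n+1)
    have e3 : g (n+1) = 0 := by
      simp [hg, eulerian_self_succ n]
    have e4 : g 0 = Nat.choose 0 m := by simp [hg, eulerian_zero_right]
    have e5 : ∀ j, g (j+1) = (j+1) * (eulerian n (j+1) * (j+1).choose m)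
        + eulerian n (j+1) * (j+1).choose m := by
      intro j; simp [hg]; ring
    rw [Finset.sum_congr rfl (fun j _ => e5 j)] at e1
    rw [Finset.sum_add_distrib] at e1
    omega
  have hfinal : (∑ j ∈ range (n+1), (n - j) * (eulerian n j * (j+1).choose m))
      + (∑ j ∈ range (n+1), g j)
      = (n + 1 - m) * ∑ j ∈ range (n+1), eulerian n j * (j+1).choose m := by
    rw [← Finset.sum_add_distrib, Finset.mul_sum]
    refine Finset.sum_congr rfl (fun j hj => ?_)
    have hjn : j ≤ n := by simpa using Nat.lt_succ_iff.mp (Finset.mem_range.mp hj)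
    calc (n - j) * (eulerian n j * (j+1).choose m) + g j
        = ((n-j) * (j+1).choose m + (j+1) * j.choose m) * eulerian n j := by
          simp only [hg]; ring
      _ = ((n + 1 - m) * (j+1).choose m) * eulerian n j := by
          rw [key_choose n m j hjn hm]
      _ = (n + 1 - m) * (eulerian n j * (j+1).choose m) := by ring
  omega

lemma worpitzky : ∀ n m : ℕ, m ≤ n →
    (n - m).factorial * stirling n (n - m)
      = ∑ j ∈ range (n+1), eulerian n j * j.choose m := by
  intro n
  induction n with
  | zero =>
    intro m hm
    interval_cases m
    simp [stirling, eulerian]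
  | succ n ih =>
    intro m hm
    rcases Nat.lt_succ_iff_lt_or_eq.mp (Nat.lt_succ_of_le hm) with hlt | heq
    · -- m ≤ n
      have hmn : m ≤ n := by omega
      rw [rhs_eq n m hmn]
      have hk : n + 1 - m = (n - m) + 1 := by omega
      rw [hk]
      have hst : stirling (n+1) (n - m + 1)
          = (n - m + 1) * stirling n (n - m + 1) + stirling n (n - m) := rfl
      rw [hst]
      cases m with
      | zero =>
        simp only [Nat.sub_zero] at *
        rw [stirling_eq_zero n (n+1) (by omega)]
        have h1 := ih 0 (Nat.zero_le n)
        simp only [Nat.sub_zero] at h1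
        have hsum : ∑ j ∈ range (n+1), eulerian n j * (j+1).choose 0
            = ∑ j ∈ range (n+1), eulerian n j * j.choose 0 := by simp
        rw [hsum, ← h1, Nat.factorial_succ]
        ring
      | succ m' =>
        have hia : (n - (m'+1) + 1).factorial * stirling n (n - (m'+1) + 1)
            = ∑ j ∈ range (n+1), eulerian n j * j.choose m' := by
          have h : n - m' = n - (m'+1) + 1 := by omega
          rw [← h, ih m' (by omega)]
        have hib : (n - (m'+1)).factorial * stirling n (n - (m'+1))
            = ∑ j ∈ range (n+1), eulerian n j * j.choose (m'+1) :=
          ih (m'+1) (by omega)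
        have hpas : ∑ j ∈ range (n+1), eulerian n j * (j+1).choose (m'+1)
            = (∑ j ∈ range (n+1), eulerian n j * j.choose m')
              + ∑ j ∈ range (n+1), eulerian n j * j.choose (m'+1) := by
          rw [← Finset.sum_add_distrib]
          refine Finset.sum_congr rfl (fun j _ => ?_)
          rw [Nat.choose_succ_succ, Nat.mul_add]
        rw [hpas, ← hia, ← hib, Nat.factorial_succ]
        ring
    · -- m = n+1
      subst heq
      rw [Nat.sub_self]
      have h0 : stirling (n+1) 0 = 0 := rfl
      rw [h0]
      rw [Finset.sum_eq_zero]
      · ring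
      · intro j hj
        have hj2 : j < n + 2 := Finset.mem_range.mp hj
        rcases eq_or_lt_of_le (Nat.lt_succ_iff.mp hj2) with hje | hjl
        · subst hje
          rw [eulerian_succ_eq_zero n n le_rfl, zero_mul]
        · rw [Nat.choose_eq_zero_of_lt hjl, mul_zero]

lemma choose_sum {j n : ℕ} (h : j ≤ n) :
    ∑ k ∈ range (n+1), j.choose k = 2^j := by
  rw [← Nat.sum_range_choose j]
  symm
  apply Finset.sum_subset
  · exact Finset.range_subset_range.mpr (by omega)
  · intro x _ hx
    exact Nat.choose_eq_zero_of_lt (by simpa using Finset.mem_range.not.mp hx)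

lemma fubini_eq (n : ℕ) : fubini n = ∑ j ∈ range (n+1), 2^j * eulerian n j := by
  unfold fubini
  rw [← Finset.sum_range_reflect (fun k => k.factorial * stirling n k) (n+1)]
  have h1 : ∀ k ∈ range (n+1), (n + 1 - 1 - k).factorial * stirling n (n + 1 - 1 - k)
      = ∑ j ∈ range (n+1), eulerian n j * j.choose k := by
    intro k hk
    have hk' : k ≤ n := Nat.lt_succ_iff.mp (Finset.mem_range.mp hk)
    have : n + 1 - 1 - k = n - k := by omega
    rw [this, worpitzky n k hk']
  rw [Finset.sum_congr rfl h1, Finset.sum_comm]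
  refine Finset.sum_congr rfl (fun j hj => ?_)
  have hj' : j ≤ n := Nat.lt_succ_iff.mp (Finset.mem_range.mp hj)
  rw [← Finset.mul_sum, choose_sum hj', mul_comm]

lemma F_succ (m : ℕ) : ∑ j ∈ range (m+2), 2^j * eulerian (m+1) j
    = ∑ j ∈ range (m+1), 2^j * (2*(m-j) + (j+1)) * eulerian m j := by
  rw [Finset.sum_range_succ']
  have h0 : 2^0 * eulerian (m+1) 0 = 1 := by
    rw [eulerian_zero_right]; ring
  rw [h0]
  have hrec : ∀ j ∈ range (m+1), 2^(j+1) * eulerian (m+1) (j+1)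
      = 2^(j+1) * ((m-j) * eulerian m j)
        + ((j+1) * (2^(j+1) * eulerian m (j+1)) + 2^(j+1) * eulerian m (j+1)) := by
    intro j hj
    have hd : eulerian (m+1) (j+1) = (m + 1 - (j+1)) * eulerian m j + (j+2) * eulerian m (j+1) := rfl
    have h : m + 1 - (j + 1) = m - j := by omega
    rw [hd, h]; ring
  rw [Finset.sum_congr rfl hrec, Finset.sum_add_distrib, Finset.sum_add_distrib]
  set g : ℕ → ℕ := fun i => i * (2^i * eulerian m i) + 2^i * eulerian m i with hg
  have hmid : (∑ j ∈ range (m+1), (j+1) * (2^(j+1) * eulerian m (j+1)))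
      + (∑ j ∈ range (m+1), 2^(j+1) * eulerian m (j+1)) + 1
      = ∑ j ∈ range (m+1), g j := by
    have e1 : ∑ i ∈ range (m+2), g i = (∑ j ∈ range (m+1), g (j+1)) + g 0 :=
      Finset.sum_range_succ' g (m+1)
    have e2 : ∑ i ∈ range (m+2), g i = (∑ j ∈ range (m+1), g j) + g (m+1) :=
      Finset.sum_range_succ g (m+1)
    have e3 : g (m+1) = 0 := by
      simp [hg, eulerian_self_succ m]
    have e4 : g 0 = 1 := by simp [hg, eulerian_zero_right]
    have e5 : ∑ j ∈ range (m+1), g (j+1)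
        = (∑ j ∈ range (m+1), (j+1) * (2^(j+1) * eulerian m (j+1)))
          + ∑ j ∈ range (m+1), 2^(j+1) * eulerian m (j+1) :=
      Finset.sum_add_distrib
    omega
  have hfinal : (∑ j ∈ range (m+1), 2^(j+1) * ((m-j) * eulerian m j))
      + (∑ j ∈ range (m+1), g j)
      = ∑ j ∈ range (m+1), 2^j * (2*(m-j) + (j+1)) * eulerian m j := by
    rw [← Finset.sum_add_distrib]
    refine Finset.sum_congr rfl (fun j hj => ?_)
    simp only [hg]
    ring
  omega

lemma main_nat (m : ℕ) :
    2 * ∑ j ∈ range (m+2), 2^j * eulerian (m+1) j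
      = 2*(m+1) * (∑ j ∈ range (m+1), 2^j * eulerian m j)
        + ∑ j ∈ range (m+1), 2^(j+1) * (m - j) * eulerian m j := by
  rw [F_succ, Finset.mul_sum, Finset.mul_sum, ← Finset.sum_add_distrib]
  refine Finset.sum_congr rfl (fun j hj => ?_)
  have hj' : j ≤ m := Nat.lt_succ_iff.mp (Finset.mem_range.mp hj)
  obtain ⟨c, rfl⟩ : ∃ c, m = j + c := ⟨m - j, by omega⟩
  have h : j + c - j = c := by omega
  rw [h]
  ring

theorem threshold_regions_eq_eulerian_sum (n : ℕ) (hn : 1 ≤ n) :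
    2 * ((fubini n : ℤ) - n * fubini (n - 1)) =
      ∑ k ∈ Finset.Icc 1 (n - 1),
        (2 : ℤ) ^ k * ((n : ℤ) - k) * (eulerian (n - 1) (k - 1) : ℤ) := by
  obtain ⟨m, rfl⟩ : ∃ m, n = m + 1 := ⟨n - 1, by omega⟩
  simp only [Nat.add_sub_cancel]
  rw [fubini_eq, fubini_eq]
  have h := main_nat m
  have hz : (2:ℤ) * (∑ j ∈ range (m+2), 2^j * eulerian (m+1) j : ℕ)
      = 2*((m:ℤ)+1) * ((∑ j ∈ range (m+1), 2^j * eulerian m j : ℕ))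
        + ((∑ j ∈ range (m+1), 2^(j+1) * (m - j) * eulerian m j : ℕ)) := by
    exact_mod_cast congrArg (fun x : ℕ => (x : ℤ)) h
  have hS : ((∑ j ∈ range (m+1), 2^(j+1) * (m - j) * eulerian m j : ℕ) : ℤ)
      = ∑ j ∈ range (m+1), (2:ℤ)^(j+1) * ((m:ℤ) - j) * (eulerian m j : ℤ) := by
    push_cast
    refine Finset.sum_congr rfl (fun j hj => ?_)
    have hj' : j ≤ m := Nat.lt_succ_iff.mp (Finset.mem_range.mp hj)
    rw [Nat.cast_sub hj']
  have hRHS : ∑ k ∈ Finset.Icc 1 m,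
        (2 : ℤ) ^ k * (((m:ℤ)+1) - k) * (eulerian m (k - 1) : ℤ)
      = ∑ j ∈ range (m+1), (2:ℤ)^(j+1) * ((m:ℤ) - j) * (eulerian m j : ℤ) := by
    rw [← Finset.Ico_add_one_right_eq_Icc, Finset.sum_Ico_eq_sum_range]
    have hm1 : m + 1 - 1 = m := by omega
    rw [hm1, Finset.sum_range_succ]
    have hz0 : (2:ℤ)^(m+1) * ((m:ℤ) - m) * (eulerian m m : ℤ) = 0 := by
      rw [sub_self, mul_zero, zero_mul]
    rw [hz0, add_zero]
    refine Finset.sum_congr rfl (fun i hi => ?_)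
    have h1 : 1 + i - 1 = i := by omega
    rw [h1]
    push_cast
    ring
  push_cast at hz hRHS ⊢
  rw [hRHS, ← hS]
  push_cast
  linarith
end

section
/- For n ≥ 2, the function f from Z/(q−2) to (Z/q) \ {(q−1)/2, −(q−1)/2} defined by sending the residue of i (for i in the interval [−(q−3)/2, (q−3)/2]) to the residue of i mod q, for odd q ≥ 5, is a bijection that preserves and reflects the relations 'a+b=0', 'a−b=0', and 'a=0'; that is, a+b=0 in Z/(q−2) iff f(a)+f(b)=0 in Z/q, a−b=0 iff f(a)−f(b)=0, and a=0 iff f(a)=0. -/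
open Finset

lemma aux_valMinAbs_intCast {n : ℕ} [NeZero n] {x : ℤ} (h : x * 2 ∈ Set.Ioc (-(n : ℤ)) n) :
    ((x : ZMod n)).valMinAbs = x :=
  (ZMod.valMinAbs_spec _ _).mpr ⟨rfl, h⟩

lemma aux_cast_zero {n : ℕ} {x : ℤ} (hx : |x| < n) :
    (x : ZMod n) = 0 ↔ x = 0 := by
  rw [ZMod.intCast_zmod_eq_zero_iff_dvd]
  exact ⟨fun h => Int.eq_zero_of_abs_lt_dvd h hx, fun h => h ▸ dvd_zero _⟩

theorem valMinAbs_bijection_preserves_relations (n : ℕ) (hn : 2 ≤ n)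
    (q : ℕ) (hq : Odd q) (h5 : 5 ≤ q) :
    let f : ZMod (q - 2) → ZMod q := fun a => ((a.valMinAbs : ℤ) : ZMod q)
    Set.BijOn f Set.univ
        {x : ZMod q | x ≠ (((q - 1) / 2 : ℕ) : ZMod q) ∧
          x ≠ -(((q - 1) / 2 : ℕ) : ZMod q)} ∧
      (∀ a b : ZMod (q - 2), a + b = 0 ↔ f a + f b = 0) ∧
      (∀ a b : ZMod (q - 2), a - b = 0 ↔ f a - f b = 0) ∧
      (∀ a : ZMod (q - 2), a = 0 ↔ f a = 0) := by
  intro f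
  obtain ⟨k, hk⟩ := hq
  haveI hmz : NeZero (q - 2) := ⟨by omega⟩
  haveI : NeZero q := ⟨by omega⟩
  -- bound on valMinAbs in ZMod (q-2)
  have hbound : ∀ a : ZMod (q - 2), -((k : ℤ) - 1) ≤ a.valMinAbs ∧ a.valMinAbs ≤ (k : ℤ) - 1 := by
    intro a
    have h1 := ZMod.natAbs_valMinAbs_le a
    have hm2 : (q - 2) / 2 = k - 1 := by omega
    rw [hm2] at h1
    omega
  -- the highlighted element is (k : ZMod q)
  have hh : (((q - 1) / 2 : ℕ) : ZMod q) = ((k : ℤ) : ZMod q) := by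
    have : (q - 1) / 2 = k := by omega
    rw [this]; push_cast; ring
  have hhval : (((q - 1) / 2 : ℕ) : ZMod q).valMinAbs = (k : ℤ) := by
    rw [ZMod.valMinAbs_natCast_of_le_half (by omega)]
    omega
  -- key equivalences
  have keym : ∀ x : ℤ, |x| ≤ 2 * ((k : ℤ) - 1) → ((x : ZMod (q - 2)) = 0 ↔ x = 0) := by
    intro x hx
    apply aux_cast_zero
    push_cast; omega
  have keyq : ∀ x : ℤ, |x| ≤ 2 * (k : ℤ) - 1 → ((x : ZMod q) = 0 ↔ x = 0) := by
    intro x hx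
    apply aux_cast_zero
    push_cast; omega
  have habs : ∀ x : ℤ, ∀ y : ℤ, -((k:ℤ)-1) ≤ x → x ≤ (k:ℤ) - 1 → -((k:ℤ)-1) ≤ y → y ≤ (k:ℤ)-1 →
      |x + y| ≤ 2 * ((k:ℤ) - 1) ∧ |x + y| ≤ 2 * (k:ℤ) - 1 := by
    intro x y h1 h2 h3 h4
    constructor <;> rw [abs_le] <;> omega
  -- relation lemmas
  have hadd : ∀ a b : ZMod (q - 2), a + b = 0 ↔ f a + f b = 0 := by
    intro a b
    obtain ⟨ha1, ha2⟩ := hbound a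
    obtain ⟨hb1, hb2⟩ := hbound b
    have hab := habs _ _ ha1 ha2 hb1 hb2
    have h1 : a + b = 0 ↔ ((a.valMinAbs + b.valMinAbs : ℤ) : ZMod (q - 2)) = 0 := by
      push_cast [ZMod.coe_valMinAbs]
      exact Iff.rfl
    have h2 : f a + f b = ((a.valMinAbs + b.valMinAbs : ℤ) : ZMod q) := by
      show ((a.valMinAbs : ℤ) : ZMod q) + ((b.valMinAbs : ℤ) : ZMod q) = _
      push_cast; ring
    rw [h1, h2, keym _ hab.1, keyq _ hab.2]
  have hsub : ∀ a b : ZMod (q - 2), a - b = 0 ↔ f a - f b = 0 := by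
    intro a b
    obtain ⟨ha1, ha2⟩ := hbound a
    obtain ⟨hb1, hb2⟩ := hbound b
    have hab := habs a.valMinAbs (-b.valMinAbs) ha1 ha2 (by omega) (by omega)
    have h1 : a - b = 0 ↔ ((a.valMinAbs + -b.valMinAbs : ℤ) : ZMod (q - 2)) = 0 := by
      push_cast [ZMod.coe_valMinAbs]
      constructor <;> intro h <;> linear_combination h
    have h2 : f a - f b = ((a.valMinAbs + -b.valMinAbs : ℤ) : ZMod q) := by
      show ((a.valMinAbs : ℤ) : ZMod q) - ((b.valMinAbs : ℤ) : ZMod q) = _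
      push_cast; ring
    rw [h1, h2, keym _ hab.1, keyq _ hab.2]
  have hzero : ∀ a : ZMod (q - 2), a = 0 ↔ f a = 0 := by
    intro a
    obtain ⟨ha1, ha2⟩ := hbound a
    rw [show f a = ((a.valMinAbs : ℤ) : ZMod q) from rfl,
      keyq _ (by rw [abs_le]; omega), ZMod.valMinAbs_eq_zero]
  refine ⟨⟨?_, ?_, ?_⟩, hadd, hsub, hzero⟩
  · -- MapsTo
    intro a _
    obtain ⟨ha1, ha2⟩ := hbound a
    have hfval : (f a).valMinAbs = a.valMinAbs := by
      show (((a.valMinAbs : ℤ) : ZMod q)).valMinAbs = a.valMinAbs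
      apply aux_valMinAbs_intCast
      constructor <;> push_cast <;> omega
    constructor
    · intro hc
      have : (f a).valMinAbs = (k : ℤ) := by rw [hc, hhval]
      rw [hfval] at this
      omega
    · intro hc
      have h3 : -(f a) = (((-a.valMinAbs : ℤ)) : ZMod q) := by
        show -((a.valMinAbs : ℤ) : ZMod q) = _
        push_cast; ring
      have h4 : (((-a.valMinAbs : ℤ)) : ZMod q).valMinAbs = (k : ℤ) := by
        rw [← h3, hc, neg_neg, hhval]
      rw [aux_valMinAbs_intCast (by constructor <;> push_cast <;> omega)] at h4
      omega
  · -- InjOn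
    intro a _ b _ hab
    have := (hsub a b).mpr (by rw [hab]; ring)
    rwa [sub_eq_zero] at this
  · -- SurjOn
    intro x hx
    obtain ⟨hx1, hx2⟩ := hx
    have hvb : x.valMinAbs.natAbs ≤ q / 2 := ZMod.natAbs_valMinAbs_le x
    have hne1 : x.valMinAbs ≠ (k : ℤ) := by
      intro h
      apply hx1
      rw [← ZMod.coe_valMinAbs x, h, hh]
    have hne2 : x.valMinAbs ≠ -(k : ℤ) := by
      intro h
      apply hx2
      rw [← ZMod.coe_valMinAbs x, h, hh]
      push_cast; ring
    have hvlt1 : -((k:ℤ) - 1) ≤ x.valMinAbs := by omega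
    have hvlt2 : x.valMinAbs ≤ (k:ℤ) - 1 := by omega
    refine ⟨(x.valMinAbs : ZMod (q - 2)), Set.mem_univ _, ?_⟩
    have hval : ((x.valMinAbs : ZMod (q - 2))).valMinAbs = x.valMinAbs := by
      apply aux_valMinAbs_intCast
      constructor <;> push_cast <;> omega
    show ((((x.valMinAbs : ZMod (q - 2))).valMinAbs : ℤ) : ZMod q) = x
    rw [hval, ZMod.coe_valMinAbs]
end

section
/- For q an odd prime with q > 2n+3, the number of tuples (a_1,…,a_n) ∈ (Z/q)^n with a_i ≠ ±(q−1)/2 for all i and a_i + a_j ≠ 0 for all i < j equals the number of tuples (b_1,…,b_n) ∈ (Z/(q−2))^n with b_i + b_j ≠ 0 for all i < j, whenever q−2 is also prime (or more generally working over Z/(q−2) as a commutative ring). -/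
open Finset

theorem boxed_point_count_eq_shrunk_point_count (n q : ℕ) (hq : q.Prime)
    (hodd : Odd q) (h : 2 * n + 3 < q) :
    Nat.card {a : Fin n → ZMod q //
        (∀ i : Fin n, a i ≠ (((q - 1) / 2 : ℕ) : ZMod q) ∧
          a i ≠ -(((q - 1) / 2 : ℕ) : ZMod q)) ∧
        ∀ i j : Fin n, i < j → a i + a j ≠ 0} =
      Nat.card {b : Fin n → ZMod (q - 2) // ∀ i j : Fin n, i < j → b i + b j ≠ 0} := by
  obtain ⟨k, hk⟩ := hodd
  have hq2 : 2 ≤ q := hq.two_le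
  have hq5 : 5 ≤ q := by omega
  haveI : NeZero q := ⟨by omega⟩
  haveI : NeZero (q - 2) := ⟨by omega⟩
  set m := q - 2 with hm
  set c : ZMod q := (((q - 1) / 2 : ℕ) : ZMod q) with hc
  -- valMinAbs of c and -c
  have hck : c.valMinAbs = (k : ℤ) := by
    rw [ZMod.valMinAbs_spec]
    refine ⟨?_, ?_, ?_⟩
    · have : (q - 1) / 2 = k := by omega
      rw [hc, this]; push_cast; ring
    · push_cast; omega
    · push_cast; omega
  have hcval : (2 : ℕ) * c.val ≠ q := by
    have : c.val = k := by
      have h1 : (q - 1) / 2 = k := by omega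
      rw [hc, h1, ZMod.val_natCast_of_lt (by omega)]
    omega
  have hnck : (-c).valMinAbs = -(k : ℤ) := by
    rw [ZMod.valMinAbs_neg_of_ne_half hcval, hck]
  -- bound for elements avoiding ±c
  have hbound : ∀ x : ZMod q, x ≠ c → x ≠ -c → x.valMinAbs.natAbs ≤ k - 1 := by
    intro x h1 h2
    have hv := x.valMinAbs_mem_Ioc
    simp only [Set.mem_Ioc] at hv
    have hne1 : x.valMinAbs ≠ (k : ℤ) := by
      intro hh; exact h1 (ZMod.injective_valMinAbs (by rw [hh, hck]))
    have hne2 : x.valMinAbs ≠ -(k : ℤ) := by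
      intro hh; exact h2 (ZMod.injective_valMinAbs (by rw [hh, hnck]))
    omega
  -- bound for ZMod m
  have hboundm : ∀ b : ZMod m, b.valMinAbs.natAbs ≤ k - 1 := by
    intro b
    have := b.natAbs_valMinAbs_le
    omega
  -- valMinAbs of cast up
  have hA : ∀ b : ZMod m, ((b.valMinAbs : ZMod q)).valMinAbs = b.valMinAbs := by
    intro b
    have hb := hboundm b
    rw [ZMod.valMinAbs_spec]
    exact ⟨rfl, by omega, by omega⟩
  have hB : ∀ x : ZMod q, x ≠ c → x ≠ -c →
      ((x.valMinAbs : ZMod m)).valMinAbs = x.valMinAbs := by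
    intro x h1 h2
    have hb := hbound x h1 h2
    rw [ZMod.valMinAbs_spec]
    exact ⟨rfl, by omega, by omega⟩
  -- cast-up avoids ±c
  have hGne : ∀ b : ZMod m, ((b.valMinAbs : ZMod q)) ≠ c ∧ ((b.valMinAbs : ZMod q)) ≠ -c := by
    intro b
    have hb := hboundm b
    constructor <;> intro hh
    · have := hA b; rw [hh, hck] at this; omega
    · have := hA b; rw [hh, hnck] at this; omega
  -- sum compatibility, ZMod m side
  have hzero : ∀ s : ℤ, s.natAbs ≤ 2 * k - 2 →
      (((s : ZMod q) = 0) ↔ s = 0) ∧ (((s : ZMod m) = 0) ↔ s = 0) := by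
    intro s hs
    constructor <;> rw [ZMod.intCast_zmod_eq_zero_iff_dvd] <;>
      refine ⟨fun hd => Int.eq_zero_of_abs_lt_dvd hd (by rw [Int.abs_eq_natAbs]; omega), fun hz => hz ▸ dvd_zero _⟩
  have hsumG : ∀ x y : ZMod m,
      ((x.valMinAbs : ZMod q) + (y.valMinAbs : ZMod q) = 0) ↔ x + y = 0 := by
    intro x y
    have hx := hboundm x; have hy := hboundm y
    have e1 : (x.valMinAbs : ZMod q) + (y.valMinAbs : ZMod q)
        = ((x.valMinAbs + y.valMinAbs : ℤ) : ZMod q) := by push_cast; ring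
    have e2 : x + y = ((x.valMinAbs + y.valMinAbs : ℤ) : ZMod m) := by
      push_cast [ZMod.coe_valMinAbs]; ring
    rw [e1, e2, (hzero _ (by omega)).1, (hzero _ (by omega)).2]
  have hsumF : ∀ x y : ZMod q, x ≠ c → x ≠ -c → y ≠ c → y ≠ -c →
      (((x.valMinAbs : ZMod m) + (y.valMinAbs : ZMod m) = 0) ↔ x + y = 0) := by
    intro x y hx1 hx2 hy1 hy2
    have hx := hbound x hx1 hx2; have hy := hbound y hy1 hy2
    have e1 : (x.valMinAbs : ZMod m) + (y.valMinAbs : ZMod m)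
        = ((x.valMinAbs + y.valMinAbs : ℤ) : ZMod m) := by push_cast; ring
    have e2 : x + y = ((x.valMinAbs + y.valMinAbs : ℤ) : ZMod q) := by
      push_cast [ZMod.coe_valMinAbs]; ring
    rw [e1, e2, (hzero _ (by omega)).2, (hzero _ (by omega)).1]
  refine Nat.card_congr ?_
  refine
    { toFun := fun a => ⟨fun i => (((a.1 i).valMinAbs : ℤ) : ZMod m), ?_⟩
      invFun := fun b => ⟨fun i => (((b.1 i).valMinAbs : ℤ) : ZMod q), ?_, ?_⟩
      left_inv := ?_
      right_inv := ?_ }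
  · intro i j hij hsum
    obtain ⟨ha1, ha2⟩ := a.2
    exact a.2.2 i j hij ((hsumF _ _ (ha1 i).1 (ha1 i).2 (ha1 j).1 (ha1 j).2).mp hsum)
  · intro i; exact hGne (b.1 i)
  · intro i j hij hsum
    exact b.2 i j hij ((hsumG _ _).mp hsum)
  · intro a
    apply Subtype.ext
    funext i
    show ((((a.1 i).valMinAbs : ZMod m)).valMinAbs : ZMod q) = a.1 i
    rw [hB _ (a.2.1 i).1 (a.2.1 i).2, ZMod.coe_valMinAbs]
  · intro b
    apply Subtype.ext
    funext i
    show ((((b.1 i).valMinAbs : ZMod q)).valMinAbs : ZMod m) = b.1 i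
    rw [hA, ZMod.coe_valMinAbs]
end

section
/- For n ≥ 2, the number of alternating-signed ordered set partitions of [n] whose first block has size greater than 1 equals 2·(a(n) − n·a(n−1)), where a denotes the ordered Bell numbers. -/
open Finset

lemma stirling_succ_succ (n k : ℕ) :
    stirling (n + 1) (k + 1) = (k + 1) * stirling n (k + 1) + stirling n k := rfl

lemma stirling_zero_of_lt : ∀ {n k : ℕ}, n < k → stirling n k = 0
  | 0, _ + 1, _ => rfl
  | n + 1, k + 1, h => by
    rw [stirling_succ_succ, stirling_zero_of_lt (by omega : n < k + 1),
      stirling_zero_of_lt (by omega : n < k), mul_zero, add_zero]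

lemma stirling_succ_zero (n : ℕ) : stirling (n + 1) 0 = 0 := rfl

lemma stirling_one : ∀ n : ℕ, stirling (n + 1) 1 = 1
  | 0 => rfl
  | n + 1 => by
    rw [stirling_succ_succ, stirling_one n, stirling_succ_zero]

lemma stirling_zero_add_one : ∀ n : ℕ, stirling n 0 + stirling n 1 = 1
  | 0 => rfl
  | n + 1 => by rw [stirling_succ_zero, stirling_one n]

/-- Key identity:  (k+1)! S(n,k+1) = ∑_{j<n} C(n,j+1) · k! · S(n-1-j,k). -/
lemma factorial_stirling_rec : ∀ (n k : ℕ),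
    (k + 1).factorial * stirling n (k + 1) =
      ∑ j ∈ Finset.range n, n.choose (j + 1) * (k.factorial * stirling (n - 1 - j) k)
  | 0, k => by simp [stirling_zero_of_lt (Nat.succ_pos k)]
  | n + 1, k => by
    have hsplit : ∑ j ∈ Finset.range (n + 1),
        (n + 1).choose (j + 1) * (k.factorial * stirling (n + 1 - 1 - j) k)
        = (∑ j ∈ Finset.range (n + 1), n.choose j * (k.factorial * stirling (n - j) k))
          + (∑ j ∈ Finset.range (n + 1), n.choose (j + 1) * (k.factorial * stirling (n - j) k)) := by
      rw [← Finset.sum_add_distrib]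
      refine Finset.sum_congr rfl fun j hj => ?_
      have h : n + 1 - 1 - j = n - j := by omega
      rw [h, Nat.choose_succ_succ n j, add_mul]
    have h2 : ∑ j ∈ Finset.range (n + 1), n.choose (j + 1) * (k.factorial * stirling (n - j) k)
        = ∑ j ∈ Finset.range n, n.choose (j + 1) * (k.factorial * stirling ((n - 1 - j) + 1) k) := by
      rw [Finset.sum_range_succ, Nat.choose_succ_self, zero_mul, add_zero]
      refine Finset.sum_congr rfl fun j hj => ?_
      have hj' := Finset.mem_range.mp hj
      have h : n - j = (n - 1 - j) + 1 := by omega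
      rw [h]
    have h1 : ∑ j ∈ Finset.range (n + 1), n.choose j * (k.factorial * stirling (n - j) k)
        = k.factorial * stirling n k
          + ∑ j ∈ Finset.range n, n.choose (j + 1) * (k.factorial * stirling (n - 1 - j) k) := by
      rw [Finset.sum_range_succ' (fun j => n.choose j * (k.factorial * stirling (n - j) k)) n]
      rw [Nat.choose_zero_right, one_mul, Nat.sub_zero, add_comm]
      congr 1
      refine Finset.sum_congr rfl fun j hj => ?_
      have hj' := Finset.mem_range.mp hj
      have h : n - (j + 1) = n - 1 - j := by omega
      rw [h]
    rw [hsplit, h1, h2, ← factorial_stirling_rec n k]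
    cases k with
    | zero =>
      have hz : ∑ j ∈ Finset.range n, n.choose (j + 1) *
          (Nat.factorial 0 * stirling ((n - 1 - j) + 1) 0) = 0 :=
        Finset.sum_eq_zero fun j _ => by rw [stirling_succ_zero, mul_zero, mul_zero]
      rw [hz, add_zero]
      show Nat.factorial 1 * stirling (n + 1) 1 = _
      rw [stirling_one n]
      have := stirling_zero_add_one n
      simp [Nat.factorial]
      omega
    | succ k' =>
      have hexp : ∑ j ∈ Finset.range n, n.choose (j + 1) *
            ((k' + 1).factorial * stirling ((n - 1 - j) + 1) (k' + 1))
          = (k' + 1) * ((∑ j ∈ Finset.range n, n.choose (j + 1) *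
                ((k' + 1).factorial * stirling (n - 1 - j) (k' + 1)))
              + (∑ j ∈ Finset.range n, n.choose (j + 1) *
                (k'.factorial * stirling (n - 1 - j) k'))) := by
        rw [mul_add, Finset.mul_sum, Finset.mul_sum, ← Finset.sum_add_distrib]
        refine Finset.sum_congr rfl fun j _ => ?_
        rw [stirling_succ_succ, Nat.factorial_succ k']
        ring
      rw [hexp, ← factorial_stirling_rec n (k' + 1), ← factorial_stirling_rec n k']
      rw [stirling_succ_succ, Nat.factorial_succ (k' + 1), Nat.factorial_succ k']
      ring

/-- The Fubini recurrence: choose the first block. -/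
lemma fubini_rec (n : ℕ) :
    fubini (n + 1) = ∑ j ∈ Finset.range (n + 1), (n + 1).choose (j + 1) * fubini (n - j) := by
  have hfub : ∀ m, m ≤ n → fubini m = ∑ k ∈ Finset.range (n + 1), k.factorial * stirling m k := by
    intro m hm
    rw [fubini, ← Finset.sum_range_add_sum_Ico _ (by omega : m + 1 ≤ n + 1)]
    have : ∑ k ∈ Finset.Ico (m + 1) (n + 1), k.factorial * stirling m k = 0 :=
      Finset.sum_eq_zero fun k hk => by
        rw [stirling_zero_of_lt (by exact (Finset.mem_Ico.mp hk).1), mul_zero]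
    omega
  rw [fubini, Finset.sum_range_succ' _ (n + 1)]
  have h0 : Nat.factorial 0 * stirling (n + 1) 0 = 0 := by rw [stirling_succ_zero, mul_zero]
  rw [h0, add_zero]
  have : ∑ k ∈ Finset.range (n + 1), (k + 1).factorial * stirling (n + 1) (k + 1)
      = ∑ k ∈ Finset.range (n + 1), ∑ j ∈ Finset.range (n + 1),
          (n + 1).choose (j + 1) * (k.factorial * stirling (n + 1 - 1 - j) k) :=
    Finset.sum_congr rfl fun k _ => factorial_stirling_rec (n + 1) k
  rw [this, Finset.sum_comm]
  refine Finset.sum_congr rfl fun j hj => ?_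
  have h : n + 1 - 1 - j = n - j := by omega
  rw [← Finset.mul_sum, h, ← hfub (n - j) (by omega)]

/-- `fubini` recurrence in "ite" form. -/
lemma fubini_ite (m : ℕ) :
    fubini (m + 1) = ∑ j ∈ Finset.range (m + 2),
      if j ≠ 0 then (m + 1).choose j * fubini (m + 1 - j) else 0 := by
  rw [Finset.sum_range_succ']
  simp only [Nat.add_sub_cancel, ne_eq, Nat.succ_ne_zero, not_false_eq_true, if_true,
    not_true, if_neg (by simp : ¬ (0 : ℕ) ≠ 0), add_zero]
  have : ∀ j ∈ Finset.range (m + 1),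
      (m + 1).choose (j + 1) * fubini (m + 1 - (j + 1)) = (m + 1).choose (j + 1) * fubini (m - j) := by
    intro j hj
    congr 2
    omega
  rw [Finset.sum_congr rfl this]
  exact fubini_rec m

lemma fubini_split (m : ℕ) :
    fubini (m + 1) = (m + 1) * fubini m
      + ∑ j ∈ Finset.range (m + 2), if 2 ≤ j then (m + 1).choose j * fubini (m + 1 - j) else 0 := by
  rw [fubini_ite m]
  have h1 : ∑ j ∈ Finset.range (m + 2), (if j ≠ 0 then (m + 1).choose j * fubini (m + 1 - j) else 0)
      = (∑ j ∈ Finset.range (m + 2), if j = 1 then (m + 1).choose j * fubini (m + 1 - j) else 0)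
        + ∑ j ∈ Finset.range (m + 2), if 2 ≤ j then (m + 1).choose j * fubini (m + 1 - j) else 0 := by
    rw [← Finset.sum_add_distrib]
    refine Finset.sum_congr rfl fun j _ => ?_
    rcases Nat.lt_or_ge j 1 with h | h
    · have : j = 0 := by omega
      subst this; simp
    · rcases Nat.lt_or_ge j 2 with h2 | h2
      · have : j = 1 := by omega
        subst this; simp
      · rw [if_pos (by omega : j ≠ 0), if_neg (by omega : ¬ j = 1), if_pos h2, zero_add]
  rw [h1]
  congr 1
  rw [Finset.sum_ite_eq' (Finset.range (m + 2)) 1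
    (fun j => (m + 1).choose j * fubini (m + 1 - j))]
  rw [if_pos (Finset.mem_range.mpr (by omega)), Nat.choose_one_right]
  norm_num


section OSP
variable {α : Type*} [DecidableEq α]

def IsOSPon (s : Finset α) (L : List (Finset α)) : Prop :=
  (∀ B ∈ L, B.Nonempty) ∧ L.Pairwise Disjoint ∧ (∀ B ∈ L, B ⊆ s) ∧ ∀ x ∈ s, ∃ B ∈ L, x ∈ B

lemma isOSPon_empty_iff (L : List (Finset α)) : IsOSPon (∅ : Finset α) L ↔ L = [] := by
  constructor
  · rintro ⟨h1, _, h3, _⟩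
    cases L with
    | nil => rfl
    | cons B T =>
      obtain ⟨x, hx⟩ := h1 B (by simp)
      exact absurd (h3 B (by simp) hx) (by simp)
  · rintro rfl
    exact ⟨by simp, by simp, by simp, by simp⟩

def ospEmptyEquiv : {L : List (Finset α) // IsOSPon (∅ : Finset α) L} ≃ Unit where
  toFun _ := Unit.unit
  invFun _ := ⟨[], (isOSPon_empty_iff []).mpr rfl⟩
  left_inv L := Subtype.ext ((isOSPon_empty_iff L.1).mp L.2).symm
  right_inv _ := rfl

lemma osp_ne_nil {s : Finset α} (hs : s.Nonempty) {L : List (Finset α)}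
    (h : IsOSPon s L) : L ≠ [] := by
  obtain ⟨x, hx⟩ := hs
  obtain ⟨B, hB, -⟩ := h.2.2.2 x hx
  exact List.ne_nil_of_mem hB

/-- Head/tail decomposition of ordered set partitions of a nonempty set,
with a constraint `q` on the first block. -/
def ospConsEquiv (s : Finset α) (hs : s.Nonempty) (q : Finset α → Prop)
    [DecidablePred q] :
    {L : List (Finset α) // IsOSPon s L ∧ ∀ B, L.head? = some B → q B} ≃
      Σ B : (s.powerset.filter (fun B => B.Nonempty ∧ q B) : Finset (Finset α)),
        {T : List (Finset α) // IsOSPon (s \ (B : Finset α)) T} where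
  toFun := fun ⟨L, hL, hq⟩ => by
    refine ⟨⟨L.head (osp_ne_nil hs hL), ?_⟩, ⟨L.tail, ?_⟩⟩
    · have hmem := List.head_mem (osp_ne_nil hs hL)
      refine Finset.mem_filter.mpr ⟨Finset.mem_powerset.mpr (hL.2.2.1 _ hmem),
        hL.1 _ hmem, hq _ (List.head?_eq_head _)⟩
    · set hne := osp_ne_nil hs hL
      obtain ⟨h1, h2, h3, h4⟩ := hL
      have hcons : L.head hne :: L.tail = L := List.cons_head_tail hne
      have h2' : L.Pairwise Disjoint := h2
      rw [← hcons] at h2'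
      rw [List.pairwise_cons] at h2'
      refine ⟨fun B hB => h1 B (List.mem_of_mem_tail hB), h2'.2, ?_, ?_⟩
      · intro B hB
        intro x hx
        refine Finset.mem_sdiff.mpr ⟨h3 B (List.mem_of_mem_tail hB) hx, ?_⟩
        exact fun hxh => Finset.disjoint_left.mp (h2'.1 B hB) hxh hx
      · intro x hx
        have hxs := Finset.mem_sdiff.mp hx
        obtain ⟨B, hB, hxB⟩ := h4 x hxs.1
        rw [← hcons] at hB
        rcases List.mem_cons.mp hB with rfl | hB
        · exact absurd hxB hxs.2
        · exact ⟨B, hB, hxB⟩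
  invFun := fun ⟨⟨B, hB⟩, ⟨T, hT⟩⟩ => by
    obtain ⟨hBs, hBne, hBq⟩ : B ⊆ s ∧ B.Nonempty ∧ q B := by
      have := Finset.mem_filter.mp hB
      exact ⟨Finset.mem_powerset.mp this.1, this.2.1, this.2.2⟩
    refine ⟨B :: T, ⟨?_, ?_, ?_, ?_⟩, ?_⟩
    · rintro C (⟨⟩ | hC)
      · exact hBne
      · exact hT.1 C (by assumption)
    · rw [List.pairwise_cons]
      refine ⟨fun C hC => ?_, hT.2.1⟩
      have hCs := hT.2.2.1 C hC
      exact Finset.disjoint_left.mpr fun x hxB hxC =>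
        (Finset.mem_sdiff.mp (hCs hxC)).2 hxB
    · rintro C (⟨⟩ | hC)
      · exact hBs
      · exact fun x hx => (Finset.mem_sdiff.mp (hT.2.2.1 C (by assumption) hx)).1
    · intro x hx
      by_cases hxB : x ∈ B
      · exact ⟨B, by simp, hxB⟩
      · obtain ⟨C, hC, hxC⟩ := hT.2.2.2 x (Finset.mem_sdiff.mpr ⟨hx, hxB⟩)
        exact ⟨C, by simp [hC], hxC⟩
    · intro C hC
      rw [List.head?_cons, Option.some_inj] at hC
      exact hC ▸ hBq
  left_inv := fun ⟨L, hL, hq⟩ => Subtype.ext (List.cons_head_tail (osp_ne_nil hs hL))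
  right_inv := fun ⟨⟨B, hB⟩, ⟨T, hT⟩⟩ => rfl
end OSP

section OSP2
variable {α : Type*} [DecidableEq α] [Fintype α]

lemma finite_ospon_aux : ∀ n : ℕ, ∀ s : Finset α, s.card = n →
    Finite {L : List (Finset α) // IsOSPon s L} := by
  intro n
  induction n using Nat.strong_induction_on with
  | _ n ih =>
  intro s hn
  rcases s.eq_empty_or_nonempty with rfl | hs
  · exact Finite.of_equiv Unit ospEmptyEquiv.symm
  · have e1 : {L : List (Finset α) // IsOSPon s L} ≃
        {L : List (Finset α) // IsOSPon s L ∧ ∀ B, L.head? = some B → True} :=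
      Equiv.subtypeEquivRight (by simp)
    have e2 := ospConsEquiv s hs (fun _ => True)
    haveI : ∀ B : (s.powerset.filter (fun B => B.Nonempty ∧ True) : Finset (Finset α)),
        Finite {T : List (Finset α) // IsOSPon (s \ (B : Finset α)) T} := by
      rintro ⟨B, hB⟩
      have hB' := Finset.mem_filter.mp hB
      have hBs : B ⊆ s := Finset.mem_powerset.mp hB'.1
      have hlt : (s \ B).card < n := by
        have h1 : (s \ B).card = s.card - B.card := Finset.card_sdiff_of_subset hBs
        have h2 : 0 < B.card := Finset.card_pos.mpr hB'.2.1
        have h3 : B.card ≤ s.card := Finset.card_le_card hBs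
        omega
      exact ih _ (hn ▸ hlt) _ rfl
    exact Finite.of_equiv _ (e1.trans e2).symm

lemma finite_ospon (s : Finset α) : Finite {L : List (Finset α) // IsOSPon s L} :=
  finite_ospon_aux s.card s rfl

instance (s : Finset α) : Finite {L : List (Finset α) // IsOSPon s L} := finite_ospon s

lemma card_ospon_step (s : Finset α) (hs : s.Nonempty) (q : Finset α → Prop)
    [DecidablePred q] :
    Nat.card {L : List (Finset α) // IsOSPon s L ∧ ∀ B, L.head? = some B → q B}
      = ∑ B ∈ s.powerset.filter (fun B => B.Nonempty ∧ q B),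
          Nat.card {T : List (Finset α) // IsOSPon (s \ B) T} := by
  rw [Nat.card_congr (ospConsEquiv s hs q)]
  haveI : ∀ B : (s.powerset.filter (fun B => B.Nonempty ∧ q B) : Finset (Finset α)),
      Fintype {T : List (Finset α) // IsOSPon (s \ (B : Finset α)) T} :=
    fun _ => Fintype.ofFinite _
  rw [Nat.card_eq_fintype_card, Fintype.card_sigma]
  rw [← Finset.sum_coe_sort _ (fun B => Nat.card {T : List (Finset α) // IsOSPon (s \ B) T})]
  exact Finset.sum_congr rfl fun B _ => (Nat.card_eq_fintype_card).symm

lemma sum_powerset_filter_card (s : Finset α) (p : ℕ → Prop) [DecidablePred p] (f : ℕ → ℕ) :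
    ∑ B ∈ s.powerset.filter (fun B => p B.card), f B.card
      = ∑ j ∈ Finset.range (s.card + 1), if p j then s.card.choose j * f j else 0 := by
  rw [Finset.sum_filter, Finset.powerset_card_disjiUnion]
  erw [Finset.sum_disjiUnion]
  refine Finset.sum_congr rfl fun j hj => ?_
  rw [Finset.sum_congr rfl (fun B hB => by
    rw [(Finset.mem_powersetCard.mp hB).2] :
      ∀ B ∈ s.powersetCard j, (if p B.card then f B.card else 0) = if p j then f j else 0)]
  rw [Finset.sum_const, Finset.card_powersetCard, smul_eq_mul, mul_ite, mul_zero]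


lemma card_ospon_aux : ∀ n : ℕ, ∀ s : Finset α, s.card = n →
    Nat.card {L : List (Finset α) // IsOSPon s L} = fubini n := by
  intro n
  induction n using Nat.strong_induction_on with
  | _ n ih =>
  intro s hn
  rcases s.eq_empty_or_nonempty with rfl | hs
  · have h0 : n = 0 := by simpa using hn.symm
    subst h0
    rw [Nat.card_congr (ospEmptyEquiv (α := α))]
    rw [Nat.card_unique]
    simp [fubini, stirling]
  · have e1 : {L : List (Finset α) // IsOSPon s L} ≃
        {L : List (Finset α) // IsOSPon s L ∧ ∀ B, L.head? = some B → True} :=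
      Equiv.subtypeEquivRight (by simp)
    rw [Nat.card_congr e1, card_ospon_step s hs (fun _ => True)]
    have hsum : ∀ B ∈ s.powerset.filter (fun B => B.Nonempty ∧ True),
        Nat.card {T : List (Finset α) // IsOSPon (s \ B) T} = fubini (s.card - B.card) := by
      intro B hB
      have hB' := Finset.mem_filter.mp hB
      have hBs : B ⊆ s := Finset.mem_powerset.mp hB'.1
      have hcd : (s \ B).card = s.card - B.card := Finset.card_sdiff_of_subset hBs
      have hlt : (s \ B).card < n := by
        have h2 : 0 < B.card := Finset.card_pos.mpr hB'.2.1
        have h3 : B.card ≤ s.card := Finset.card_le_card hBs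
        omega
      rw [ih _ hlt _ rfl, hcd]
    rw [Finset.sum_congr rfl hsum]
    have hfilter : s.powerset.filter (fun B => B.Nonempty ∧ True)
        = s.powerset.filter (fun B => (fun j => j ≠ 0) B.card) := by
      refine Finset.filter_congr fun B _ => ?_
      simp [Finset.card_eq_zero, Finset.nonempty_iff_ne_empty]
    rw [hfilter,
      sum_powerset_filter_card s (fun j => j ≠ 0) (fun c => fubini (s.card - c))]
    obtain ⟨m, hm⟩ : ∃ m, n = m + 1 := by
      have := Finset.card_pos.mpr hs
      exact ⟨n - 1, by omega⟩
    rw [hn, hm, ← fubini_ite m]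

lemma card_ospon (s : Finset α) :
    Nat.card {L : List (Finset α) // IsOSPon s L} = fubini s.card :=
  card_ospon_aux s.card s rfl

lemma card_ospon_big (s : Finset α) (hs : s.Nonempty) :
    Nat.card {L : List (Finset α) // IsOSPon s L ∧ ∀ B, L.head? = some B → 1 < B.card}
      = ∑ j ∈ Finset.range (s.card + 1),
          if 2 ≤ j then s.card.choose j * fubini (s.card - j) else 0 := by
  rw [card_ospon_step s hs (fun B => 1 < B.card)]
  have hsum : ∀ B ∈ s.powerset.filter (fun B => B.Nonempty ∧ 1 < B.card),
      Nat.card {T : List (Finset α) // IsOSPon (s \ B) T} = fubini (s.card - B.card) := by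
    intro B hB
    have hBs : B ⊆ s := Finset.mem_powerset.mp (Finset.mem_filter.mp hB).1
    rw [card_ospon (s \ B), Finset.card_sdiff_of_subset hBs]
  rw [Finset.sum_congr rfl hsum]
  have hfilter : s.powerset.filter (fun B => B.Nonempty ∧ 1 < B.card)
      = s.powerset.filter (fun B => (fun j => 2 ≤ j) B.card) := by
    refine Finset.filter_congr fun B _ => ?_
    constructor
    · rintro ⟨-, h2⟩; omega
    · intro h2
      exact ⟨Finset.card_pos.mp (by omega), by omega⟩
  rw [hfilter, sum_powerset_filter_card s (fun j => 2 ≤ j) (fun c => fubini (s.card - c))]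

/-- The key numeric split. -/
lemma fubini_eq_add_big (s : Finset α) (hs : s.Nonempty) :
    fubini s.card = s.card * fubini (s.card - 1)
      + Nat.card {L : List (Finset α) // IsOSPon s L ∧ ∀ B, L.head? = some B → 1 < B.card} := by
  obtain ⟨m, hm⟩ : ∃ m, s.card = m + 1 := by
    have := Finset.card_pos.mpr hs
    exact ⟨s.card - 1, by omega⟩
  rw [card_ospon_big s hs, hm]
  simpa using fubini_split m

end OSP2

/-- The alternating boolean list of length `k` starting with `b`. -/
def altL : Bool → ℕ → List Bool
  | _, 0 => []
  | b, k + 1 => b :: altL (!b) k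

lemma altL_length : ∀ (b : Bool) (k : ℕ), (altL b k).length = k
  | _, 0 => rfl
  | b, k + 1 => by simp [altL, altL_length]

lemma altL_chain' : ∀ (b : Bool) (k : ℕ), (altL b k).Chain' (· ≠ ·)
  | _, 0 => List.isChain_nil
  | _, 1 => List.isChain_singleton _
  | b, k + 2 => by
    show List.Chain' (· ≠ ·) (b :: (!b) :: altL (!(!b)) k)
    refine List.isChain_cons_cons.mpr ?_
    exact ⟨by cases b <;> simp, altL_chain' (!b) (k + 1)⟩

lemma chain'_eq_altL : ∀ sg : List Bool, sg.Chain' (· ≠ ·) →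
    ∀ b : Bool, sg.head? = some b → sg = altL b sg.length
  | [], _, b, h => by simp at h
  | [a], _, b, h => by
    obtain rfl : a = b := by simpa using h
    rfl
  | a :: c :: t, hch, b, h => by
    obtain rfl : a = b := by simpa using h
    have h1 : a ≠ c := (List.isChain_cons_cons.mp hch).1
    have hc : c = !a := by revert h1; cases a <;> cases c <;> simp
    have ht := (List.isChain_cons_cons.mp hch).2
    have hrec := chain'_eq_altL (c :: t) ht c rfl
    show a :: c :: t = a :: altL (!a) (c :: t).length
    rw [← hc]
    exact congrArg _ hrec

theorem card_alternating_signed_osp_first_block_big (n : ℕ) (hn : 2 ≤ n) :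
    (Nat.card {p : List (Finset (Fin n)) × List Bool //
        IsOSP p.1 ∧ p.2.length = p.1.length ∧ p.2.Chain' (· ≠ ·) ∧
          ∀ B, p.1.head? = some B → 1 < B.card} : ℤ) =
      2 * ((fubini n : ℤ) - n * fubini (n - 1)) := by
  have hne : (Finset.univ : Finset (Fin n)).Nonempty :=
    ⟨⟨0, by omega⟩, Finset.mem_univ _⟩
  have hiff : ∀ L : List (Finset (Fin n)), IsOSP L ↔ IsOSPon Finset.univ L := by
    intro L
    constructor
    · rintro ⟨h1, h2, h3⟩
      exact ⟨h1, h2, fun B _ => Finset.subset_univ B, fun x _ => h3 x⟩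
    · rintro ⟨h1, h2, h3, h4⟩
      exact ⟨h1, h2, fun x => h4 x (Finset.mem_univ x)⟩
  have E : {p : List (Finset (Fin n)) × List Bool //
        IsOSP p.1 ∧ p.2.length = p.1.length ∧ p.2.Chain' (· ≠ ·) ∧
          ∀ B, p.1.head? = some B → 1 < B.card} ≃
      {L : List (Finset (Fin n)) //
        IsOSPon Finset.univ L ∧ ∀ B, L.head? = some B → 1 < B.card} × Bool := {
    toFun := fun ⟨⟨L, sg⟩, hosp, _, _, hhead⟩ => (⟨L, (hiff L).mp hosp, hhead⟩, sg.headI)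
    invFun := fun ⟨⟨L, hL⟩, b⟩ =>
      ⟨(L, altL b L.length), (hiff L).mpr hL.1, altL_length b _, altL_chain' b _, hL.2⟩
    left_inv := by
      rintro ⟨⟨L, sg⟩, hosp, hlen, hch, hhead⟩
      apply Subtype.ext
      have hLne : L ≠ [] := osp_ne_nil hne ((hiff L).mp hosp)
      have hsgne : sg ≠ [] := by
        intro h
        rw [h] at hlen
        exact hLne (List.length_eq_zero_iff.mp hlen.symm)
      have hhd : sg.head? = some sg.headI := by
        cases sg with
        | nil => exact absurd rfl hsgne
        | cons a t => rfl
      have := chain'_eq_altL sg hch sg.headI hhd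
      show (L, altL sg.headI L.length) = (L, sg)
      rw [← hlen, ← this]
    right_inv := by
      rintro ⟨⟨L, hL⟩, b⟩
      have hLne : L ≠ [] := osp_ne_nil hne hL.1
      obtain ⟨k, hk⟩ : ∃ k, L.length = k + 1 := by
        cases L with
        | nil => exact absurd rfl hLne
        | cons a t => exact ⟨t.length, rfl⟩
      refine Prod.ext (Subtype.ext rfl) ?_
      show (altL b L.length).headI = b
      rw [hk]
      rfl }
  rw [Nat.card_congr E, Nat.card_prod, Nat.card_eq_fintype_card (α := Bool)]
  have hcard := fubini_eq_add_big (Finset.univ : Finset (Fin n)) hne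
  rw [Finset.card_univ, Fintype.card_fin] at hcard
  rw [Fintype.card_bool]
  push_cast
  rw [hcard]
  push_cast
  ring
end

section
/- For n ≥ 2, the total count 4·a(n) + ∑_{k=1}^{n} 4·(k! − (k−1)!)·(k·S(n,k) − n·S(n−1,k−1)) equals the number of labeled colored threshold graphs on n vertices, which can be encoded as: the number of triples consisting of an ordered set partition of [n] with alternating signs that is of one of the three types (i) all blocks after the marker ½ placed at the start; (ii) first block size > 1 with ½ placed after any of the k blocks; (iii) first block a singleton, ½ placed immediately after it, first and second blocks with the same sign, remaining consecutive blocks alternating. -/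
open Finset

/-- Regions of the boxed threshold arrangement, encoded as ordered set
partitions with signs and a marker position `m` (the position of `½`),
of one of the three types. -/
def IsBoxedThresholdOrder {n : ℕ} (p : List (Finset (Fin n)) × List Bool × ℕ) : Prop :=
  IsOSP p.1 ∧ p.2.1.length = p.1.length ∧ p.2.2 ≤ p.1.length ∧
    ((p.2.2 = 0 ∧ p.2.1.Chain' (· ≠ ·)) ∨
      (1 ≤ p.2.2 ∧ (∀ B, p.1.head? = some B → 1 < B.card) ∧
        (p.2.1.take p.2.2).Chain' (· ≠ ·) ∧ (p.2.1.drop p.2.2).Chain' (· ≠ ·)) ∨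
      (p.2.2 = 1 ∧ (∀ B, p.1.head? = some B → B.card = 1) ∧
        (∃ b, p.2.1.head? = some b ∧ p.2.1.tail.head? = some b) ∧
        p.2.1.tail.Chain' (· ≠ ·)))

namespace BTO

/-- the alternating boolean list of length `m` starting with `b` -/
def altL : ℕ → Bool → List Bool
  | 0, _ => []
  | m + 1, b => b :: altL m (!b)

@[simp] lemma altL_length (m : ℕ) (b : Bool) : (altL m b).length = m := by
  induction m generalizing b with
  | zero => rfl
  | succ m ih => simp [altL, ih]

lemma altL_chain' (m : ℕ) (b : Bool) : (altL m b).Chain' (· ≠ ·) := by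
  induction m generalizing b with
  | zero => simp [altL]; exact List.isChain_nil
  | succ m ih =>
    cases m with
    | zero => simp [altL]; exact List.isChain_singleton _
    | succ m' =>
      refine List.isChain_cons_cons.2 ⟨?_, ih (!b)⟩
      simp [altL]

@[simp] lemma altL_headI (m : ℕ) (b : Bool) : (altL (m + 1) b).headI = b := rfl

lemma eq_altL {s : List Bool} (h : s.Chain' (· ≠ ·)) : s = altL s.length s.headI := by
  induction s with
  | nil => rfl
  | cons a t ih =>
    cases t with
    | nil => rfl
    | cons c t' =>
      rcases List.isChain_cons_cons.1 h with ⟨hac, ht⟩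
      have h2 := ih ht
      have hc : c = !a := by
        revert hac; cases a <;> cases c <;> decide
      simp only [List.headI] at h2
      simp only [altL, List.length_cons, List.headI]
      rw [h2, hc]
      simp [altL]

/-- alternating lists of positive length `k` are classified by their head -/
def altEquiv (k : ℕ) (hk : 1 ≤ k) :
    {s : List Bool // s.length = k ∧ s.Chain' (· ≠ ·)} ≃ Bool where
  toFun s := s.1.headI
  invFun b := ⟨altL k b, altL_length k b, altL_chain' k b⟩
  left_inv s := by
    apply Subtype.ext
    have := eq_altL s.2.2
    rw [s.2.1] at this
    exact this.symm
  right_inv b := by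
    obtain ⟨m, rfl⟩ : ∃ m, k = m + 1 := ⟨k - 1, by omega⟩
    simp

lemma card_alt (k : ℕ) :
    Nat.card {s : List Bool // s.length = k ∧ s.Chain' (· ≠ ·)} =
      if k = 0 then 1 else 2 := by
  rcases Nat.eq_zero_or_pos k with rfl | hk
  · rw [if_pos rfl]
    have e : {s : List Bool // s.length = 0 ∧ s.Chain' (· ≠ ·)} ≃ Unit :=
      { toFun := fun _ => Unit.unit
        invFun := fun _ => ⟨[], rfl, List.isChain_nil⟩
        left_inv := fun s => by
          apply Subtype.ext
          exact (List.length_eq_zero_iff.1 s.2.1).symm ▸ rfl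
        right_inv := fun _ => rfl }
    rw [Nat.card_congr e]
    simp
  · rw [if_neg (by omega)]
    rw [Nat.card_congr (altEquiv k hk)]
    simp [Nat.card_eq_fintype_card]


/-- split equiv -/
def splitEquiv (k m : ℕ) (hm : m ≤ k) :
    {s : List Bool // s.length = k ∧ (s.take m).Chain' (· ≠ ·) ∧ (s.drop m).Chain' (· ≠ ·)} ≃
      {u : List Bool // u.length = m ∧ u.Chain' (· ≠ ·)} ×
        {v : List Bool // v.length = k - m ∧ v.Chain' (· ≠ ·)} where
  toFun s := (⟨s.1.take m, by simp [s.2.1]; omega, s.2.2.1⟩,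
              ⟨s.1.drop m, by simp [s.2.1], s.2.2.2⟩)
  invFun uv := ⟨uv.1.1 ++ uv.2.1, by simp [uv.1.2.1, uv.2.2.1]; omega,
    by rw [List.take_left' uv.1.2.1]; exact uv.1.2.2,
    by rw [List.drop_left' uv.1.2.1]; exact uv.2.2.2⟩
  left_inv s := Subtype.ext (List.take_append_drop m s.1)
  right_inv uv := by
    ext : 2
    · exact List.take_left' uv.1.2.1
    · exact List.drop_left' uv.1.2.1

lemma card_split (k m : ℕ) (hm1 : 1 ≤ m) (hmk : m ≤ k) :
    Nat.card {s : List Bool // s.length = k ∧ (s.take m).Chain' (· ≠ ·) ∧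
        (s.drop m).Chain' (· ≠ ·)} = if m = k then 2 else 4 := by
  rw [Nat.card_congr (splitEquiv k m hmk), Nat.card_prod, card_alt, card_alt]
  rcases eq_or_ne m k with rfl | h
  · simp [if_neg (by omega : ¬ m = 0)]
  · rw [if_neg h, if_neg (by omega), if_neg (by omega)]

lemma head?_eq_some_headI {α} [Inhabited α] {l : List α} (h : l ≠ []) :
    l.head? = some l.headI := by
  cases l with
  | nil => exact absurd rfl h
  | cons a t => rfl

/-- tail equiv for type (iii) -/
def tailEquiv (k : ℕ) (hk : 2 ≤ k) :
    {s : List Bool // s.length = k ∧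
        (∃ c, s.head? = some c ∧ s.tail.head? = some c) ∧ s.tail.Chain' (· ≠ ·)} ≃
      {t : List Bool // t.length = k - 1 ∧ t.Chain' (· ≠ ·)} where
  toFun s := ⟨s.1.tail, by simp [s.2.1], s.2.2.2⟩
  invFun t := ⟨t.1.headI :: t.1, by
    have ht : t.1 ≠ [] := by
      intro h
      have := t.2.1
      rw [h] at this
      simp at this
      omega
    exact ⟨by simp [t.2.1]; omega, ⟨t.1.headI, rfl, head?_eq_some_headI ht⟩, t.2.2⟩⟩
  left_inv s := by
    apply Subtype.ext
    obtain ⟨hlen, ⟨c, hc1, hc2⟩, _⟩ := s.2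
    cases hs : s.1 with
    | nil => rw [hs] at hlen; simp at hlen; omega
    | cons a t =>
      rw [hs] at hc1 hc2
      simp at hc1
      have ht : t ≠ [] := by
        intro h; rw [h] at hc2; simp at hc2
      simp only [List.tail_cons] at hc2 ⊢
      rw [head?_eq_some_headI ht] at hc2
      simp at hc2
      rw [hs]
      simp only [List.tail_cons]
      rw [hc2, hc1]
  right_inv t := Subtype.ext rfl


lemma card_tailtype (k : ℕ) :
    Nat.card {s : List Bool // s.length = k ∧
        (∃ c, s.head? = some c ∧ s.tail.head? = some c) ∧ s.tail.Chain' (· ≠ ·)} =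
      if 2 ≤ k then 2 else 0 := by
  rcases le_or_gt 2 k with hk | hk
  · rw [if_pos hk, Nat.card_congr (tailEquiv k hk), card_alt, if_neg (by omega)]
  · rw [if_neg (by omega)]
    rw [Nat.card_eq_zero]
    left
    constructor
    rintro ⟨s, hlen, ⟨c, hc1, hc2⟩, -⟩
    interval_cases k
    · rw [List.length_eq_zero_iff.1 hlen] at hc1; simp at hc1
    · obtain ⟨a, rfl⟩ := List.length_eq_one_iff.1 hlen
      simp at hc2

/-- the sign/marker condition, with `k` the number of blocks and `b` whether the
first block is a singleton. -/
def SignCond (k : ℕ) (b : Bool) (s : List Bool) (m : ℕ) : Prop :=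
  s.length = k ∧ m ≤ k ∧
    ((m = 0 ∧ s.Chain' (· ≠ ·)) ∨
      (1 ≤ m ∧ b = false ∧ (s.take m).Chain' (· ≠ ·) ∧ (s.drop m).Chain' (· ≠ ·)) ∨
      (m = 1 ∧ b = true ∧ (∃ c, s.head? = some c ∧ s.tail.head? = some c) ∧
        s.tail.Chain' (· ≠ ·)))

/-- decorated sign data -/
def SignT (k : ℕ) (b : Bool) : Type := {sm : List Bool × ℕ // SignCond k b sm.1 sm.2}

instance signT_finite (k : ℕ) (b : Bool) : Finite (SignT k b) := by
  haveI : Finite {l : List Bool // l.length = k} := Finite.of_fintype (List.Vector Bool k)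
  refine Finite.of_injective
    (fun sm : SignT k b => ((⟨sm.1.1, sm.2.1⟩ : List.Vector Bool k),
      (⟨sm.1.2, Nat.lt_succ_of_le sm.2.2.1⟩ : Fin (k + 1)))) ?_
  rintro ⟨⟨s₁, m₁⟩, h₁⟩ ⟨⟨s₂, m₂⟩, h₂⟩ h
  simp only [Prod.mk.injEq, Subtype.mk.injEq, Fin.mk.injEq] at h
  apply Subtype.ext
  simp only [Prod.mk.injEq]
  exact ⟨h.1, h.2⟩

lemma nat_card_sigma {ι : Type*} [Fintype ι] (F : ι → Type*) [∀ i, Finite (F i)] :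
    Nat.card (Σ i, F i) = ∑ i, Nat.card (F i) := by
  haveI : ∀ i, Fintype (F i) := fun i => Fintype.ofFinite _
  simp only [Nat.card_eq_fintype_card]
  exact Fintype.card_sigma

lemma card_signfiber (k : ℕ) (b : Bool) (m : ℕ) :
    Nat.card {s : List Bool // SignCond k b s m} =
      if m = 0 then (if k = 0 then 1 else 2)
      else if m > k then 0
      else if b then (if m = 1 then (if 2 ≤ k then 2 else 0) else 0)
      else (if m = k then 2 else 4) := by
  rcases eq_or_ne m 0 with rfl | hm0
  · rw [if_pos rfl, ← card_alt k]
    apply Nat.card_congr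
    apply Equiv.subtypeEquivRight
    intro s
    unfold SignCond
    constructor
    · rintro ⟨h1, -, (⟨-, h⟩ | ⟨h, -⟩ | ⟨h, -⟩) ⟩
      · exact ⟨h1, h⟩
      · omega
      · omega
    · rintro ⟨h1, h2⟩
      exact ⟨h1, by omega, Or.inl ⟨rfl, h2⟩⟩
  rcases lt_or_ge k m with hkm | hkm
  · rw [if_neg hm0, if_pos hkm, Nat.card_eq_zero]
    left
    exact ⟨fun s => by have := s.2.2.1; omega⟩
  rw [if_neg hm0, if_neg (by omega)]
  cases b with
  | false =>
    rw [← card_split k m (by omega) hkm]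
    apply Nat.card_congr
    apply Equiv.subtypeEquivRight
    intro s
    unfold SignCond
    constructor
    · rintro ⟨h1, -, (⟨h, -⟩ | ⟨-, -, h3, h4⟩ | ⟨-, h, -⟩)⟩
      · omega
      · exact ⟨h1, h3, h4⟩
      · simp at h
    · rintro ⟨h1, h3, h4⟩
      exact ⟨h1, hkm, Or.inr (Or.inl ⟨by omega, rfl, h3, h4⟩)⟩
  | true =>
    rcases eq_or_ne m 1 with rfl | hm1
    · rw [if_pos rfl, ← card_tailtype k]
      apply Nat.card_congr
      apply Equiv.subtypeEquivRight
      intro s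
      unfold SignCond
      constructor
      · rintro ⟨h1, -, (⟨h, -⟩ | ⟨-, h, -⟩ | ⟨-, -, h3, h4⟩)⟩
        · omega
        · simp at h
        · exact ⟨h1, h3, h4⟩
      · rintro ⟨h1, h3, h4⟩
        exact ⟨h1, hkm, Or.inr (Or.inr ⟨rfl, rfl, h3, h4⟩)⟩
    · rw [if_pos rfl, if_neg hm1, Nat.card_eq_zero]
      left
      constructor
      rintro ⟨s, -, -, (⟨h, -⟩ | ⟨-, h, -⟩ | ⟨h, -⟩)⟩
      · omega
      · simp at h
      · omega


def signFiberEquiv (k : ℕ) (b : Bool) (m : Fin (k + 1)) :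
    {q : SignT k b // (⟨q.1.2, Nat.lt_succ_of_le q.2.2.1⟩ : Fin (k + 1)) = m} ≃
      {s : List Bool // SignCond k b s m.1} where
  toFun q := ⟨q.1.1.1, by
    have h : q.1.1.2 = m.1 := congrArg Fin.val q.2
    rw [← h]; exact q.1.2⟩
  invFun s := ⟨⟨(s.1, m.1), s.2⟩, Fin.ext rfl⟩
  left_inv q := by
    apply Subtype.ext
    apply Subtype.ext
    have h : q.1.1.2 = m.1 := congrArg Fin.val q.2
    exact Prod.ext rfl h.symm
  right_inv s := rfl

lemma card_signT_sum (k : ℕ) (b : Bool) :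
    Nat.card (SignT k b) =
      ∑ m ∈ Finset.range (k + 1), Nat.card {s : List Bool // SignCond k b s m} := by
  rw [← Nat.card_congr (Equiv.sigmaFiberEquiv
    (fun q : SignT k b => (⟨q.1.2, Nat.lt_succ_of_le q.2.2.1⟩ : Fin (k + 1))))]
  haveI : ∀ m : Fin (k + 1), Finite
      {q : SignT k b // (⟨q.1.2, Nat.lt_succ_of_le q.2.2.1⟩ : Fin (k + 1)) = m} :=
    fun m => Subtype.finite
  rw [nat_card_sigma, ← Fin.sum_univ_eq_sum_range]
  exact Finset.sum_congr rfl fun m _ => Nat.card_congr (signFiberEquiv k b m)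

lemma card_signT_false (k : ℕ) (hk : 1 ≤ k) : Nat.card (SignT k false) = 4 * k := by
  obtain ⟨k', rfl⟩ : ∃ k', k = k' + 1 := ⟨k - 1, by omega⟩
  rw [card_signT_sum]
  have hval : ∀ m ∈ Finset.range (k' + 1 + 1),
      Nat.card {s : List Bool // SignCond (k' + 1) false s m} =
        if m = 0 then 2 else if m = k' + 1 then 2 else 4 := by
    intro m hm
    rw [Finset.mem_range] at hm
    rw [card_signfiber]
    rcases eq_or_ne m 0 with rfl | h0
    · simp
    · rw [if_neg h0, if_neg h0, if_neg (by omega : ¬ m > k' + 1)]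
      simp
  rw [Finset.sum_congr rfl hval]
  rw [Finset.sum_range_succ, Finset.sum_range_succ']
  have h1 : ∀ i ∈ Finset.range k',
      (if i + 1 = 0 then 2 else if i + 1 = k' + 1 then 2 else 4) = 4 := by
    intro i hi
    rw [Finset.mem_range] at hi
    rw [if_neg (by omega), if_neg (by omega)]
  rw [Finset.sum_congr rfl h1, Finset.sum_const, Finset.card_range]
  simp
  omega

lemma card_signT_true (k : ℕ) (hk : 1 ≤ k) :
    Nat.card (SignT k true) = 2 + if 2 ≤ k then 2 else 0 := by
  obtain ⟨k', rfl⟩ : ∃ k', k = k' + 1 := ⟨k - 1, by omega⟩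
  rw [card_signT_sum]
  have hval : ∀ m ∈ Finset.range (k' + 1 + 1),
      Nat.card {s : List Bool // SignCond (k' + 1) true s m} =
        if m = 0 then 2 else if m = 1 then (if 2 ≤ k' + 1 then 2 else 0) else 0 := by
    intro m hm
    rw [Finset.mem_range] at hm
    rw [card_signfiber]
    rcases eq_or_ne m 0 with rfl | h0
    · simp
    · rw [if_neg h0, if_neg h0, if_neg (by omega : ¬ m > k' + 1), if_pos rfl]
  rw [Finset.sum_congr rfl hval]
  rw [Finset.sum_range_succ', Finset.sum_range_succ']
  have h1 : ∀ i ∈ Finset.range k',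
      (if i + 1 + 1 = 0 then 2 else if i + 1 + 1 = 1 then (if 2 ≤ k' + 1 then 2 else 0) else 0)
        = 0 := by
    intro i hi
    rw [if_neg (by omega), if_neg (by omega)]
  rw [Finset.sum_congr rfl h1, Finset.sum_const, Finset.card_range]
  rcases le_or_gt 2 (k' + 1) with h | h
  · rw [if_pos h]
    simp
  · rw [if_neg (by omega)]
    simp
    omega


lemma surj_comp_iff {α β γ δ : Type*} (e₁ : α ≃ γ) (e₂ : β ≃ δ) (f : α → β) :
    Function.Surjective f ↔ Function.Surjective (⇑e₂ ∘ f ∘ ⇑e₁.symm) := by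
  constructor
  · intro h
    exact (e₂.surjective.comp h).comp e₁.symm.surjective
  · intro h y
    obtain ⟨x, hx⟩ := h (e₂ y)
    exact ⟨e₁.symm x, e₂.injective hx⟩

/-- transport surjection counts along equivalences -/
lemma card_surj_congr {α β γ δ : Type*} [Fintype α] [Fintype β] [Fintype γ] [Fintype δ]
    [DecidableEq α] [DecidableEq γ] [DecidableEq β] [DecidableEq δ] (e₁ : α ≃ γ) (e₂ : β ≃ δ) :
    Fintype.card {f : α → β // Function.Surjective f} =
      Fintype.card {f : γ → δ // Function.Surjective f} :=
  Fintype.card_congr ((Equiv.arrowCongr e₁ e₂).subtypeEquiv fun f => by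
    rw [Equiv.arrowCongr]
    exact surj_comp_iff e₁ e₂ f)

/-- the number of surjections from `Fin n` onto `Fin k` -/
def surjCard (n k : ℕ) : ℕ := Fintype.card {f : Fin n → Fin k // Function.Surjective f}

lemma surjCard_zero_succ (k : ℕ) : surjCard 0 (k + 1) = 0 := by
  rw [surjCard, Fintype.card_eq_zero_iff]
  constructor
  intro q
  obtain ⟨x, -⟩ := q.2 0
  exact x.elim0

lemma surjCard_succ_zero (n : ℕ) : surjCard (n + 1) 0 = 0 := by
  rw [surjCard, Fintype.card_eq_zero_iff]
  constructor
  intro q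
  exact (q.1 0).elim0

lemma surjCard_zero_zero : surjCard 0 0 = 1 :=
  Fintype.card_eq_one_iff.2
    ⟨⟨fun x => x.elim0, fun y => y.elim0⟩, fun q => Subtype.ext (funext fun x => x.elim0)⟩

/-- the key per-value equivalence for the surjection recursion -/
def snocEquiv (n k : ℕ) (c : Fin k) :
    {f : Fin (n + 1) → Fin k // Function.Surjective f ∧ f (Fin.last n) = c} ≃
      {g : Fin n → Fin k // ∀ y, y ≠ c → ∃ x, g x = y} where
  toFun q := ⟨q.1 ∘ Fin.castSucc, by
    intro y hy
    obtain ⟨x, hx⟩ := q.2.1 y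
    have hxl : x ≠ Fin.last n := by
      intro h
      rw [h, q.2.2] at hx
      exact hy hx.symm
    obtain ⟨x', hx'⟩ := Fin.exists_castSucc_eq.2 hxl
    exact ⟨x', by rw [Function.comp_apply, hx', hx]⟩⟩
  invFun g := ⟨Fin.snoc g.1 c, by
    refine ⟨?_, Fin.snoc_last _ _⟩
    intro y
    rcases eq_or_ne y c with rfl | hy
    · exact ⟨Fin.last n, Fin.snoc_last _ _⟩
    · obtain ⟨x, hx⟩ := g.2 y hy
      exact ⟨Fin.castSucc x, by rw [Fin.snoc_castSucc, hx]⟩⟩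
  left_inv q := by
    apply Subtype.ext
    have h := Fin.snoc_init_self q.1
    rw [q.2.2] at h
    exact h
  right_inv g := by
    apply Subtype.ext
    funext x
    simp only [Function.comp_apply]
    exact Fin.snoc_castSucc _ _ _

lemma card_almost (n k : ℕ) (c : Fin k) :
    Fintype.card {g : Fin n → Fin k // ∀ y, y ≠ c → ∃ x, g x = y} =
      surjCard n k + surjCard n (k - 1) := by
  have hiff : ∀ g : Fin n → Fin k,
      (∀ y, y ≠ c → ∃ x, g x = y) ↔
        (Function.Surjective g ∨
          ((∀ y, y ≠ c → ∃ x, g x = y) ∧ ¬∃ x, g x = c)) := by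
    intro g
    constructor
    · intro h
      by_cases hc : ∃ x, g x = c
      · left
        intro y
        rcases eq_or_ne y c with rfl | hy
        · exact hc
        · exact h y hy
      · exact Or.inr ⟨h, hc⟩
    · rintro (h | ⟨h, -⟩) y hy
      · exact h y
      · exact h y hy
  rw [Fintype.card_congr (Equiv.subtypeEquivRight hiff)]
  have hdisj : Disjoint (fun g : Fin n → Fin k => Function.Surjective g)
      (fun g => (∀ y, y ≠ c → ∃ x, g x = y) ∧ ¬∃ x, g x = c) := by
    intro r h1 h2
    intro g hg
    exact absurd ((h1 g hg) c) ((h2 g hg).2)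
  have hmiss : Fintype.card
      {g : Fin n → Fin k // (∀ y, y ≠ c → ∃ x, g x = y) ∧ ¬∃ x, g x = c} =
        surjCard n (k - 1) := by
    have e : {g : Fin n → Fin k // (∀ y, y ≠ c → ∃ x, g x = y) ∧ ¬∃ x, g x = c} ≃
        {h : Fin n → {y : Fin k // y ≠ c} // Function.Surjective h} :=
      { toFun := fun q => ⟨fun x => ⟨q.1 x, fun e => q.2.2 ⟨x, e⟩⟩, by
          rintro ⟨y, hy⟩
          obtain ⟨x, hx⟩ := q.2.1 y hy
          exact ⟨x, Subtype.ext hx⟩⟩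
        invFun := fun h => ⟨fun x => (h.1 x).1, by
          constructor
          · intro y hy
            obtain ⟨x, hx⟩ := h.2 ⟨y, hy⟩
            exact ⟨x, congrArg Subtype.val hx⟩
          · rintro ⟨x, hx⟩
            exact (h.1 x).2 hx⟩
        left_inv := fun q => Subtype.ext rfl
        right_inv := fun h => Subtype.ext (funext fun x => Subtype.ext rfl) }
    rw [Fintype.card_congr e]
    have hcard : Fintype.card {y : Fin k // y ≠ c} = k - 1 := by
      have h1 : Fintype.card {y : Fin k // y = c} = 1 := Fintype.card_subtype_eq c
      have h2 := Fintype.card_subtype_compl (fun y : Fin k => y = c)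
      rw [h1, Fintype.card_fin] at h2
      exact h2
    exact card_surj_congr (Equiv.refl (Fin n)) (Fintype.equivFinOfCardEq hcard)
  rw [Fintype.card_subtype_or_disjoint _ _ hdisj, hmiss]
  rfl

lemma surjCard_succ (n k : ℕ) :
    surjCard (n + 1) k = k * (surjCard n k + surjCard n (k - 1)) := by
  rcases Nat.eq_zero_or_pos k with rfl | hk
  · rw [surjCard_succ_zero]
    ring
  have h1 : surjCard (n + 1) k =
      ∑ c : Fin k, Fintype.card
        {f : Fin (n + 1) → Fin k // Function.Surjective f ∧ f (Fin.last n) = c} := by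
    rw [surjCard, ← Fintype.card_sigma]
    apply Fintype.card_congr
    exact (Equiv.sigmaFiberEquiv (fun q : {f : Fin (n+1) → Fin k // Function.Surjective f} =>
      q.1 (Fin.last n))).symm.trans (Equiv.sigmaCongrRight fun c =>
      (Equiv.subtypeSubtypeEquivSubtypeInter
        (fun f : Fin (n + 1) → Fin k => Function.Surjective f)
        (fun f => f (Fin.last n) = c)))
  rw [h1]
  have h2 : ∀ c : Fin k, Fintype.card
      {f : Fin (n + 1) → Fin k // Function.Surjective f ∧ f (Fin.last n) = c} =
        surjCard n k + surjCard n (k - 1) := fun c => by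
    rw [Fintype.card_congr (snocEquiv n k c), card_almost]
  rw [Finset.sum_congr rfl fun c _ => h2 c, Finset.sum_const, Finset.card_univ,
    Fintype.card_fin, smul_eq_mul]

lemma surjCard_eq (n k : ℕ) : surjCard n k = k.factorial * stirling n k := by
  induction n generalizing k with
  | zero =>
    cases k with
    | zero => rw [surjCard_zero_zero, stirling]; rfl
    | succ k => rw [surjCard_zero_succ, stirling]; ring
  | succ n ih =>
    cases k with
    | zero => rw [surjCard_succ_zero, stirling]; ring
    | succ k =>
      rw [surjCard_succ, ih, ih, stirling]
      simp only [Nat.add_sub_cancel]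
      rw [Nat.factorial_succ]
      ring


/-- `P x f` : `x` is the unique element mapped to value `0`. -/
def Psing {n k : ℕ} (x : Fin n) (f : Fin n → Fin k) : Prop :=
  (f x : ℕ) = 0 ∧ ∀ y, y ≠ x → (f y : ℕ) ≠ 0

instance psingDec {n k : ℕ} (x : Fin n) (f : Fin n → Fin k) : Decidable (Psing x f) :=
  inferInstanceAs (Decidable ((f x : ℕ) = 0 ∧ ∀ y, y ≠ x → (f y : ℕ) ≠ 0))

lemma min'_eq_of_singleton {α : Type*} [LinearOrder α] {s : Finset α} {a : α}
    (hs : s.Nonempty) (h : s = {a}) : s.min' hs = a := by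
  subst h
  exact Finset.min'_singleton a

lemma filter_eq_singleton_iff {n k : ℕ} (f : Fin n → Fin k) (x : Fin n) :
    (univ.filter fun y => (f y : ℕ) = 0) = {x} ↔ Psing x f := by
  rw [Finset.eq_singleton_iff_unique_mem]
  simp only [Finset.mem_filter, Finset.mem_univ, true_and, Psing]
  constructor
  · rintro ⟨h1, h2⟩
    exact ⟨h1, fun y hy hy0 => hy (h2 y hy0)⟩
  · rintro ⟨h1, h2⟩
    refine ⟨h1, fun y hy0 => ?_⟩
    by_contra hy
    exact h2 y hy hy0

def psingEquiv (n k : ℕ) (hk : 0 < k) (x : Fin n) :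
    {f : Fin n → Fin k // Function.Surjective f ∧ Psing x f} ≃
      {h : {y : Fin n // y ≠ x} → {z : Fin k // (z : ℕ) ≠ 0} // Function.Surjective h} where
  toFun q := ⟨fun y => ⟨q.1 y.1, q.2.2.2 y.1 y.2⟩, by
    rintro ⟨z, hz⟩
    obtain ⟨x', hx'⟩ := q.2.1 z
    have hne : x' ≠ x := by
      intro h
      rw [h] at hx'
      exact hz (hx' ▸ q.2.2.1)
    exact ⟨⟨x', hne⟩, Subtype.ext hx'⟩⟩
  invFun h := ⟨fun y => if hy : y = x then ⟨0, hk⟩ else (h.1 ⟨y, hy⟩).1, by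
    refine ⟨?_, ?_, ?_⟩
    · intro z
      rcases eq_or_ne (z : ℕ) 0 with hz | hz
      · exact ⟨x, by dsimp only; rw [dif_pos rfl]; exact Fin.ext hz.symm⟩
      · obtain ⟨y, hy⟩ := h.2 ⟨z, hz⟩
        exact ⟨y.1, by dsimp only; rw [dif_neg y.2]; exact Subtype.ext_iff.1 hy⟩
    · dsimp only
      rw [dif_pos rfl]
    · intro y hy
      dsimp only
      rw [dif_neg hy]
      exact (h.1 ⟨y, hy⟩).2⟩
  left_inv q := by
    apply Subtype.ext
    funext y
    dsimp only
    rcases eq_or_ne y x with rfl | hy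
    · rw [dif_pos rfl]
      exact Fin.ext q.2.2.1.symm
    · rw [dif_neg hy]
  right_inv h := by
    apply Subtype.ext
    funext y
    apply Subtype.ext
    dsimp only
    rw [dif_neg y.2]

lemma card_ne_zero_fin (k : ℕ) (hk : 0 < k) :
    Fintype.card {z : Fin k // (z : ℕ) ≠ 0} = k - 1 := by
  have h1 : Fintype.card {z : Fin k // (z : ℕ) = 0} = 1 := by
    rw [Fintype.card_congr (Equiv.subtypeEquivRight (fun z : Fin k =>
      show (z : ℕ) = 0 ↔ z = ⟨0, hk⟩ by
        rw [Fin.ext_iff]))]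
    exact Fintype.card_subtype_eq _
  have h2 := Fintype.card_subtype_compl (fun z : Fin k => (z : ℕ) = 0)
  rw [h1, Fintype.card_fin] at h2
  exact h2

lemma card_ne_fin (n : ℕ) (x : Fin n) :
    Fintype.card {y : Fin n // y ≠ x} = n - 1 := by
  have h1 : Fintype.card {y : Fin n // y = x} = 1 := Fintype.card_subtype_eq x
  have h2 := Fintype.card_subtype_compl (fun y : Fin n => y = x)
  rw [h1, Fintype.card_fin] at h2
  exact h2

lemma card_surj_psing (n k : ℕ) (hk : 0 < k) (x : Fin n) :
    Fintype.card {f : Fin n → Fin k // Function.Surjective f ∧ Psing x f} =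
      surjCard (n - 1) (k - 1) := by
  rw [Fintype.card_congr (psingEquiv n k hk x)]
  exact card_surj_congr (Fintype.equivFinOfCardEq (card_ne_fin n x))
    (Fintype.equivFinOfCardEq (card_ne_zero_fin k hk))

lemma card_surj_single (n k : ℕ) (hk : 0 < k) :
    Fintype.card {f : Fin n → Fin k //
        Function.Surjective f ∧ (univ.filter fun y => ((f y : ℕ) = 0)).card = 1} =
      n * surjCard (n - 1) (k - 1) := by
  have hne : ∀ q : {f : Fin n → Fin k //
      Function.Surjective f ∧ (univ.filter fun y => ((f y : ℕ) = 0)).card = 1},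
      (univ.filter fun y => ((q.1 y : ℕ) = 0)).Nonempty :=
    fun q => Finset.card_pos.1 (by rw [q.2.2]; omega)
  have key : ∀ (q : {f : Fin n → Fin k //
      Function.Surjective f ∧ (univ.filter fun y => ((f y : ℕ) = 0)).card = 1}) (x : Fin n),
      (univ.filter fun y => ((q.1 y : ℕ) = 0)).min' (hne q) = x ↔ Psing x q.1 := by
    intro q x
    obtain ⟨a, ha⟩ := Finset.card_eq_one.1 q.2.2
    rw [← filter_eq_singleton_iff]
    constructor
    · intro h
      have hax : a = x := by rw [← h, min'_eq_of_singleton (hne q) ha]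
      rw [ha, hax]
    · intro h
      exact min'_eq_of_singleton (hne q) h
  rw [Fintype.card_congr (Equiv.sigmaFiberEquiv
    (fun q : {f : Fin n → Fin k // Function.Surjective f ∧
      (univ.filter fun y => ((f y : ℕ) = 0)).card = 1} =>
        (univ.filter fun y => ((q.1 y : ℕ) = 0)).min' (hne q))).symm]
  rw [Fintype.card_sigma]
  have hfib : ∀ x : Fin n,
      Fintype.card {q : {f : Fin n → Fin k // Function.Surjective f ∧
        (univ.filter fun y => ((f y : ℕ) = 0)).card = 1} //
          (univ.filter fun y => ((q.1 y : ℕ) = 0)).min' (hne q) = x} =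
        surjCard (n - 1) (k - 1) := by
    intro x
    rw [← card_surj_psing n k hk x]
    exact Fintype.card_congr
      { toFun := fun Q => ⟨Q.1.1, Q.1.2.1, (key Q.1 x).1 Q.2⟩
        invFun := fun p => ⟨⟨p.1, p.2.1, by
          rw [(filter_eq_singleton_iff p.1 x).2 p.2.2]; rfl⟩, (key _ x).2 p.2.2⟩
        left_inv := fun Q => Subtype.ext (Subtype.ext rfl)
        right_inv := fun p => Subtype.ext rfl }
  rw [Finset.sum_congr rfl fun x _ => hfib x, Finset.sum_const, Finset.card_univ,
    Fintype.card_fin, smul_eq_mul]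


section OSP

variable {n : ℕ}

/-- index of the block containing `x` -/
def idxOf (L : List (Finset (Fin n))) (x : Fin n) : ℕ :=
  L.findIdx (fun B => decide (x ∈ B))

lemma idx_lt {L : List (Finset (Fin n))} (hL : IsOSP L) (x : Fin n) :
    idxOf L x < L.length := by
  apply List.findIdx_lt_length_of_exists
  obtain ⟨B, hB, hx⟩ := hL.2.2 x
  exact ⟨B, hB, by simpa⟩

lemma mem_idx {L : List (Finset (Fin n))} (hL : IsOSP L) (x : Fin n) :
    x ∈ L[idxOf L x]'(idx_lt hL x) := by
  have := List.findIdx_getElem (p := fun B => decide (x ∈ B)) (xs := L) (w := idx_lt hL x)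
  exact of_decide_eq_true this

lemma idx_unique {L : List (Finset (Fin n))} (hL : IsOSP L) {x : Fin n} {i j : ℕ}
    (hi : i < L.length) (hj : j < L.length) (hxi : x ∈ L[i]) (hxj : x ∈ L[j]) : i = j := by
  by_contra hne
  have hpair := List.pairwise_iff_getElem.1 hL.2.1
  rcases lt_or_gt_of_ne hne with h | h
  · exact absurd hxj (Finset.disjoint_left.1 (hpair i j hi hj h) hxi)
  · exact absurd hxi (Finset.disjoint_left.1 (hpair j i hj hi h) hxj)

lemma idx_eq_iff {L : List (Finset (Fin n))} (hL : IsOSP L) (x : Fin n) {i : ℕ}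
    (hi : i < L.length) : idxOf L x = i ↔ x ∈ L[i] := by
  constructor
  · rintro rfl
    exact mem_idx hL x
  · intro h
    exact idx_unique hL (idx_lt hL x) hi (mem_idx hL x) h

lemma idx_surj {L : List (Finset (Fin n))} (hL : IsOSP L) {i : ℕ} (hi : i < L.length) :
    ∃ x, idxOf L x = i := by
  obtain ⟨x, hx⟩ := hL.1 (L[i]'hi) (L.getElem_mem hi)
  exact ⟨x, (idx_eq_iff hL x hi).2 hx⟩

lemma osp_length_le {L : List (Finset (Fin n))} (hL : IsOSP L) : L.length ≤ n := by
  have hs : Function.Surjective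
      (fun x : Fin n => (⟨idxOf L x, idx_lt hL x⟩ : Fin L.length)) := by
    rintro ⟨i, hi⟩
    obtain ⟨x, hx⟩ := idx_surj hL hi
    exact ⟨x, Fin.ext hx⟩
  have := Fintype.card_le_of_surjective _ hs
  simpa using this

lemma osp_length_pos {L : List (Finset (Fin n))} (hL : IsOSP L) (hn : 0 < n) :
    0 < L.length := by
  obtain ⟨B, hB, -⟩ := hL.2.2 ⟨0, hn⟩
  exact List.length_pos_iff.2 (List.ne_nil_of_mem hB)

lemma osp_reconstruct {L : List (Finset (Fin n))} (hL : IsOSP L) {k : ℕ}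
    (hk : L.length = k) :
    L = List.ofFn (fun i : Fin k => univ.filter fun x => idxOf L x = i.1) := by
  subst hk
  apply List.ext_getElem (by simp)
  intro i h1 h2
  rw [List.getElem_ofFn]
  ext x
  simp only [Finset.mem_filter, Finset.mem_univ, true_and]
  exact (idx_eq_iff hL x h1).symm

/-- blocks of a surjection -/
def blocks {k : ℕ} (f : Fin n → Fin k) : List (Finset (Fin n)) :=
  List.ofFn (fun i : Fin k => univ.filter fun x => f x = i)

@[simp] lemma blocks_length {k : ℕ} (f : Fin n → Fin k) : (blocks f).length = k := by
  simp [blocks]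

lemma blocks_isOSP {k : ℕ} {f : Fin n → Fin k} (hf : Function.Surjective f) :
    IsOSP (blocks f) := by
  refine ⟨?_, ?_, ?_⟩
  · intro B hB
    rw [blocks, List.mem_ofFn] at hB
    obtain ⟨i, rfl⟩ := hB
    obtain ⟨x, hx⟩ := hf i
    exact ⟨x, by simp [hx]⟩
  · rw [List.pairwise_iff_getElem]
    intro i j hi hj hij
    simp only [blocks, List.getElem_ofFn]
    rw [Finset.disjoint_left]
    intro x hx hx'
    simp only [Finset.mem_filter, Finset.mem_univ, true_and] at hx hx'
    rw [hx] at hx'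
    have : i = j := congrArg Fin.val hx'
    omega
  · intro x
    refine ⟨univ.filter fun y => f y = f x, ?_, by simp⟩
    rw [blocks, List.mem_ofFn]
    exact ⟨f x, rfl⟩

lemma idx_blocks {k : ℕ} {f : Fin n → Fin k} (hf : Function.Surjective f) (x : Fin n) :
    idxOf (blocks f) x = (f x).1 := by
  have hlt : (f x).1 < (blocks f).length := by simp [(f x).2]
  apply (idx_eq_iff (blocks_isOSP hf) x hlt).2
  simp only [blocks, List.getElem_ofFn]
  simp [Fin.ext_iff]

lemma blocks_getElem_zero {k : ℕ} (f : Fin n → Fin k) (h : 0 < (blocks f).length) :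
    (blocks f)[0]'h = univ.filter fun x => ((f x : ℕ) = 0) := by
  simp only [blocks, List.getElem_ofFn]
  ext x
  simp [Fin.ext_iff]

lemma isBTO_iff (p : List (Finset (Fin n)) × List Bool × ℕ) (hOSP : IsOSP p.1)
    (h0 : 0 < p.1.length) :
    IsBoxedThresholdOrder p ↔
      SignCond p.1.length (decide ((p.1[0]'h0).card = 1)) p.2.1 p.2.2 := by
  have hne : p.1 ≠ [] := List.length_pos_iff.1 h0
  have hhead : p.1.head? = some (p.1[0]'h0) := by
    rw [List.head?_eq_head hne]
    congr 1
    exact List.head_eq_getElem hne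
  have hmem : (p.1[0]'h0) ∈ p.1 := p.1.getElem_mem h0
  have hcard : 0 < (p.1[0]'h0).card := Finset.card_pos.2 (hOSP.1 _ hmem)
  have hc2 : (∀ B, p.1.head? = some B → 1 < B.card) ↔
      (decide ((p.1[0]'h0).card = 1) = false) := by
    rw [decide_eq_false_iff_not]
    constructor
    · intro h
      have := h _ hhead
      omega
    · intro h B hB
      rw [hhead] at hB
      have : p.1[0]'h0 = B := Option.some_injective _ hB
      rw [← this]
      omega
  have hc3 : (∀ B, p.1.head? = some B → B.card = 1) ↔
      (decide ((p.1[0]'h0).card = 1) = true) := by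
    rw [decide_eq_true_eq]
    constructor
    · intro h
      exact h _ hhead
    · intro h B hB
      rw [hhead] at hB
      have : p.1[0]'h0 = B := Option.some_injective _ hB
      rw [← this]
      exact h
  unfold IsBoxedThresholdOrder SignCond
  rw [← hc2, ← hc3]
  constructor
  · rintro ⟨-, h1, h2, h3⟩
    exact ⟨h1, h2, h3⟩
  · rintro ⟨h1, h2, h3⟩
    exact ⟨hOSP, h1, h2, h3⟩

end OSP

section Main

variable {n : ℕ}

/-- the type of decorated ordered set partitions -/
def Dt (n : ℕ) : Type :=
  {p : List (Finset (Fin n)) × List Bool × ℕ // IsBoxedThresholdOrder p}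

def projK (q : Dt n) : Fin (n + 1) :=
  ⟨q.1.1.length, Nat.lt_succ_of_le (osp_length_le q.2.1)⟩

/-- whether the zero fiber is a singleton -/
def bf {k : ℕ} (f : {f : Fin n → Fin k // Function.Surjective f}) : Bool :=
  decide ((univ.filter fun x => ((f.1 x : ℕ) = 0)).card = 1)

def projF {k : Fin (n + 1)} (q : {q : Dt n // projK q = k}) :
    {f : Fin n → Fin k.1 // Function.Surjective f} :=
  ⟨fun x => ⟨idxOf q.1.1.1 x, by
      have hlen : q.1.1.1.length = k.1 := congrArg Fin.val q.2
      rw [← hlen]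
      exact idx_lt q.1.2.1 x⟩, by
    rintro ⟨i, hi⟩
    have hlen : q.1.1.1.length = k.1 := congrArg Fin.val q.2
    obtain ⟨x, hx⟩ := idx_surj q.1.2.1 (show i < q.1.1.1.length by omega)
    exact ⟨x, Fin.ext hx⟩⟩

lemma invAux (hn : 2 ≤ n) (k : Fin (n + 1))
    (f : {f : Fin n → Fin k.1 // Function.Surjective f}) (sm : SignT k.1 (bf f)) :
    IsBoxedThresholdOrder (blocks f.1, sm.1.1, sm.1.2) := by
  have hk0 : 0 < k.1 := Fin.pos (f.1 ⟨0, by omega⟩)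
  have h0' : 0 < (blocks f.1).length := by rw [blocks_length]; exact hk0
  apply (isBTO_iff (blocks f.1, sm.1.1, sm.1.2) (blocks_isOSP f.2) h0').2
  have h1 : (blocks f.1).length = k.1 := blocks_length f.1
  have h2 : decide ((((blocks f.1, sm.1.1, sm.1.2).1[0]'h0').card = 1)) = bf f := by
    rw [show (blocks f.1, sm.1.1, sm.1.2).1[0]'h0' =
      univ.filter (fun x => ((f.1 x : ℕ) = 0)) from blocks_getElem_zero f.1 h0']
    rfl
  rw [show ((blocks f.1, sm.1.1, sm.1.2).1.length) = k.1 from h1, h2]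
  exact sm.2

def fiberEquiv (hn : 2 ≤ n) (k : Fin (n + 1))
    (f : {f : Fin n → Fin k.1 // Function.Surjective f}) :
    {q : {q : Dt n // projK q = k} // projF q = f} ≃ SignT k.1 (bf f) where
  toFun Q := ⟨(Q.1.1.1.2.1, Q.1.1.1.2.2), by
    have hOSP : IsOSP Q.1.1.1.1 := Q.1.1.2.1
    have hlen : Q.1.1.1.1.length = k.1 := congrArg Fin.val Q.1.2
    have h0 : 0 < Q.1.1.1.1.length := osp_length_pos hOSP (by omega)
    have hidx : ∀ x, idxOf Q.1.1.1.1 x = (f.1 x).1 := fun x =>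
      congrArg Fin.val (congrFun (congrArg Subtype.val Q.2) x)
    have hblock : Q.1.1.1.1[0]'h0 = univ.filter fun x => ((f.1 x : ℕ) = 0) := by
      ext x
      simp only [Finset.mem_filter, Finset.mem_univ, true_and]
      rw [← (idx_eq_iff hOSP x h0), hidx x]
    have hsc := (isBTO_iff Q.1.1.1 hOSP h0).1 Q.1.1.2
    rw [hlen, hblock] at hsc
    exact hsc⟩
  invFun sm :=
    ⟨⟨⟨(blocks f.1, sm.1.1, sm.1.2), invAux hn k f sm⟩, by
        apply Fin.ext
        simp only [projK, blocks_length]⟩, by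
      apply Subtype.ext
      funext x
      apply Fin.ext
      exact idx_blocks f.2 x⟩
  left_inv Q := by
    apply Subtype.ext
    apply Subtype.ext
    apply Subtype.ext
    have hOSP : IsOSP Q.1.1.1.1 := Q.1.1.2.1
    have hlen : Q.1.1.1.1.length = k.1 := congrArg Fin.val Q.1.2
    have hidx : ∀ x, idxOf Q.1.1.1.1 x = (f.1 x).1 := fun x =>
      congrArg Fin.val (congrFun (congrArg Subtype.val Q.2) x)
    have hL : blocks f.1 = Q.1.1.1.1 := by
      have h1 : blocks f.1 =
          List.ofFn (fun i : Fin k.1 => univ.filter fun x => idxOf Q.1.1.1.1 x = i.1) := by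
        unfold blocks
        congr 1
        funext i
        ext x
        simp only [Finset.mem_filter, Finset.mem_univ, true_and]
        rw [Fin.ext_iff, hidx x]
      rw [h1, ← osp_reconstruct hOSP hlen]
    show ((blocks f.1, Q.1.1.1.2.1, Q.1.1.1.2.2) :
      List (Finset (Fin n)) × List Bool × ℕ) = Q.1.1.1
    rw [hL]
  right_inv sm := rfl

lemma card_Dt (hn : 2 ≤ n) :
    Nat.card (Dt n) = ∑ k : Fin (n + 1),
      ∑ f : {f : Fin n → Fin k.1 // Function.Surjective f},
        Nat.card (SignT k.1 (bf f)) := by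
  have ek : ∀ k : Fin (n + 1), {q : Dt n // projK q = k} ≃
      Σ f : {f : Fin n → Fin k.1 // Function.Surjective f},
        {q : {q : Dt n // projK q = k} // projF q = f} :=
    fun k => (Equiv.sigmaFiberEquiv (projF (k := k))).symm
  haveI h2 : ∀ (k : Fin (n + 1)) (f : {f : Fin n → Fin k.1 // Function.Surjective f}),
      Finite {q : {q : Dt n // projK q = k} // projF q = f} :=
    fun k f => Finite.of_equiv _ (fiberEquiv hn k f).symm
  haveI h3 : ∀ k : Fin (n + 1), Finite {q : Dt n // projK q = k} :=
    fun k => Finite.of_equiv _ (ek k).symm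
  rw [← Nat.card_congr (Equiv.sigmaFiberEquiv (projK (n := n))), nat_card_sigma]
  apply Finset.sum_congr rfl
  intro k _
  rw [Nat.card_congr (ek k), nat_card_sigma]
  apply Finset.sum_congr rfl
  intro f _
  exact Nat.card_congr (fiberEquiv hn k f)

lemma stirling_pos_zero (m : ℕ) (hm : 1 ≤ m) : stirling m 0 = 0 := by
  obtain ⟨m', rfl⟩ : ∃ m', m = m' + 1 := ⟨m - 1, by omega⟩
  rfl

lemma surjCard_zero' (m : ℕ) (hm : 1 ≤ m) : surjCard m 0 = 0 := by
  obtain ⟨m', rfl⟩ : ∃ m', m = m' + 1 := ⟨m - 1, by omega⟩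
  exact surjCard_succ_zero m'

/-- the per-`k` contribution -/
noncomputable def G (n k : ℕ) : ℤ :=
  (n : ℤ) * (surjCard (n - 1) (k - 1) : ℤ) * (2 + if 2 ≤ k then 2 else 0) +
    ((surjCard n k : ℤ) - (n : ℤ) * (surjCard (n - 1) (k - 1) : ℤ)) * (4 * k)

lemma G_zero (hn : 2 ≤ n) : G n 0 = 0 := by
  unfold G
  rw [surjCard_zero' n (by omega), surjCard_zero' (n - 1) (by omega)]
  push_cast
  ring

lemma inner_sum (hn : 2 ≤ n) (k : Fin (n + 1)) :
    (∑ f : {f : Fin n → Fin k.1 // Function.Surjective f},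
      (Nat.card (SignT k.1 (bf f)) : ℤ)) = G n k.1 := by
  rcases Nat.eq_zero_or_pos k.1 with hk | hk
  · haveI : IsEmpty {f : Fin n → Fin k.1 // Function.Surjective f} :=
      ⟨fun q => by rw [hk] at q; exact (q.1 ⟨0, by omega⟩).elim0⟩
    rw [Finset.univ_eq_empty, Finset.sum_empty, hk, G_zero hn]
  · have hcast : ∀ f : {f : Fin n → Fin k.1 // Function.Surjective f},
        (Nat.card (SignT k.1 (bf f)) : ℤ) =
          if bf f = true then (2 + if 2 ≤ k.1 then 2 else 0 : ℤ) else 4 * k.1 := by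
      intro f
      cases hbf : bf f
      · rw [if_neg (by simp), card_signT_false k.1 hk]
        push_cast
        ring
      · rw [if_pos rfl, card_signT_true k.1 hk]
        rcases le_or_gt 2 k.1 with h | h
        · rw [if_pos h, if_pos h]
          norm_num
        · rw [if_neg (by omega), if_neg (by omega)]
          norm_num
    rw [Finset.sum_congr rfl (fun f _ => hcast f), Finset.sum_ite, Finset.sum_const,
      Finset.sum_const]
    have htrue : (univ.filter fun f : {f : Fin n → Fin k.1 // Function.Surjective f} =>
        bf f = true).card = n * surjCard (n - 1) (k.1 - 1) := by
      rw [← Fintype.card_subtype]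
      have e1 : {x : {f : Fin n → Fin k.1 // Function.Surjective f} // bf x = true} ≃
          {g : Fin n → Fin k.1 // Function.Surjective g ∧
            (univ.filter fun y => ((g y : ℕ) = 0)).card = 1} :=
        (Equiv.subtypeSubtypeEquivSubtypeInter
          (fun f : Fin n → Fin k.1 => Function.Surjective f) (fun g =>
            decide ((univ.filter fun y => ((g y : ℕ) = 0)).card = 1) = true)).trans
          (Equiv.subtypeEquivRight (fun g => by rw [decide_eq_true_eq]))
      exact (Fintype.card_congr e1).trans (card_surj_single n k.1 hk)
    have htot : (univ.filter fun f : {f : Fin n → Fin k.1 // Function.Surjective f} =>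
        bf f = true).card + (univ.filter fun f : {f : Fin n → Fin k.1 //
          Function.Surjective f} => ¬ (bf f = true)).card = surjCard n k.1 := by
      rw [Finset.card_filter_add_card_filter_not, Finset.card_univ]
      rfl
    rw [htrue] at htot ⊢
    have hfalse : ((univ.filter fun f : {f : Fin n → Fin k.1 //
        Function.Surjective f} => ¬ (bf f = true)).card : ℤ) =
          (surjCard n k.1 : ℤ) - (n : ℤ) * (surjCard (n - 1) (k.1 - 1) : ℤ) := by
      push_cast [← htot]
      ring
    rw [nsmul_eq_mul, nsmul_eq_mul, hfalse]
    unfold G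
    push_cast
    ring

lemma per_term (n k : ℕ) (hn : 2 ≤ n) (hk : 1 ≤ k) :
    G n k = 4 * ((k.factorial : ℤ) * stirling n k) +
      4 * ((k.factorial : ℤ) - (k - 1).factorial) *
        ((k : ℤ) * stirling n k - (n : ℤ) * stirling (n - 1) (k - 1)) := by
  obtain ⟨j, rfl⟩ : ∃ j, k = j + 1 := ⟨k - 1, by omega⟩
  unfold G
  simp only [Nat.add_sub_cancel]
  rw [surjCard_eq, surjCard_eq]
  rcases Nat.eq_zero_or_pos j with rfl | hj
  · rw [stirling_pos_zero (n - 1) (by omega), if_neg (by omega)]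
    simp [Nat.factorial]
    push_cast
    ring
  · rw [if_pos (by omega)]
    have hfact : ((j + 1).factorial : ℤ) = (j + 1) * (j.factorial : ℤ) := by
      rw [Nat.factorial_succ]
      push_cast
      ring
    push_cast [hfact]
    ring

end Main

end BTO

theorem card_colored_threshold_orders (n : ℕ) (hn : 2 ≤ n) :
    (Nat.card {p : List (Finset (Fin n)) × List Bool × ℕ //
        IsBoxedThresholdOrder p} : ℤ) =
      4 * (fubini n : ℤ) +
        ∑ k ∈ Finset.Icc 1 n,
          4 * ((k.factorial : ℤ) - (k - 1).factorial) *
            ((k : ℤ) * stirling n k - (n : ℤ) * stirling (n - 1) (k - 1)) := by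
  rw [show Nat.card {p : List (Finset (Fin n)) × List Bool × ℕ //
        IsBoxedThresholdOrder p} = Nat.card (BTO.Dt n) from rfl]
  rw [BTO.card_Dt hn]
  push_cast
  rw [Finset.sum_congr rfl (fun k _ => BTO.inner_sum hn k)]
  rw [Fin.sum_univ_eq_sum_range (fun k => BTO.G n k) (n + 1)]
  have hsplit : Finset.range (n + 1) = insert 0 (Finset.Icc 1 n) := by
    ext a
    simp only [Finset.mem_range, Finset.mem_insert, Finset.mem_Icc]
    omega
  have h0notin : (0 : ℕ) ∉ Finset.Icc 1 n := by simp
  rw [hsplit, Finset.sum_insert h0notin, BTO.G_zero hn, zero_add]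
  have hfub : 4 * (fubini n : ℤ) =
      ∑ k ∈ Finset.Icc 1 n, 4 * ((k.factorial : ℤ) * stirling n k) := by
    rw [fubini]
    push_cast
    rw [Finset.mul_sum, hsplit, Finset.sum_insert h0notin]
    rw [BTO.stirling_pos_zero n (by omega)]
    simp
  rw [hfub, ← Finset.sum_add_distrib]
  apply Finset.sum_congr rfl
  intro k hk
  rw [Finset.mem_Icc] at hk
  exact BTO.per_term n k hn hk.1
end

section
/- For n ≥ 1 and 0 ≤ j ≤ n, the absolute value of the coefficient of t^j in the polynomial ∏_{i=1}^{n}(t − (2i−1)) equals the number of signed permutations of [n] with exactly j odd cycles. -/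
open Finset

/-- Negation on `{±1, …, ±n}`, encoded as `Fin n × Bool`. -/
def negate {n : ℕ} (x : Fin n × Bool) : Fin n × Bool := (x.1, !x.2)

/-- The number of odd cycles of a signed permutation `π`: orbits of `π` on
`{±1, …, ±n}` that are disjoint from their negation come in pairs under
negation, and we count these pairs. -/
noncomputable def oddCycleCount {n : ℕ} (π : Equiv.Perm (Fin n × Bool)) : ℕ :=
  Nat.card {O : Set (Fin n × Bool) //
      (∃ x, O = {y | π.SameCycle x y}) ∧ ∀ y ∈ O, negate y ∉ O} / 2

namespace SPaux
variable {n : ℕ}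
lemma negate_negate (x : Fin n × Bool) : negate (negate x) = x := by simp [negate]
lemma negate_inj : Function.Injective (negate (n := n)) := Function.Involutive.injective negate_negate
@[simp] lemma negate_ne (x : Fin n × Bool) : negate x ≠ x := by simp [negate, Prod.ext_iff]
@[simp] lemma ne_negate (x : Fin n × Bool) : x ≠ negate x := fun h => negate_ne x h.symm
@[simp] lemma negate_eq_negate {x y : Fin n × Bool} : negate x = negate y ↔ x = y := negate_inj.eq_iff
def z (n : ℕ) : Fin (n+1) × Bool := (Fin.last n, false)
def p (n : ℕ) : Fin (n+1) × Bool → Prop := fun y => y.1 ≠ Fin.last n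
instance : DecidablePred (p n) := fun y => by unfold p; infer_instance
lemma not_p_iff {y : Fin (n+1) × Bool} : ¬ p n y ↔ y = z n ∨ y = negate (z n) := by
  rcases y with ⟨i, b⟩; cases b <;> simp [p, z, negate, Prod.ext_iff]
lemma negate_eq_iff {x y : Fin n × Bool} : negate x = y ↔ x = negate y := by
  constructor <;> rintro rfl <;> simp [negate_negate]
def nu (m : ℕ) : Equiv.Perm (Fin m × Bool) :=
  Function.Involutive.toPerm negate negate_negate
@[simp] lemma nu_apply {m : ℕ} (x : Fin m × Bool) : nu m x = negate x := rfl
@[simp] lemma nu_inv_apply {m : ℕ} (x : Fin m × Bool) : (nu m)⁻¹ x = negate x := rfl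
lemma p_negate_iff {y : Fin (n+1) × Bool} : p n (negate y) ↔ p n y := Iff.rfl
lemma p_z : ¬ p n (z n) := by simp [p, z]
lemma p_negate_z : ¬ p n (negate (z n)) := by simp [p, z, negate]

noncomputable def ins (x : Fin (n+1) × Bool) : Equiv.Perm (Fin (n+1) × Bool) :=
  if x = negate (z n) then Equiv.swap (z n) (negate (z n))
  else Equiv.swap (z n) x * Equiv.swap (negate (z n)) (negate x)

lemma ins_apply (x y : Fin (n+1) × Bool) :
    ins x y = if y = z n then x else if y = negate (z n) then negate x
      else if y = x then z n else if y = negate x then negate (z n) else y := by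
  unfold ins
  by_cases hx : x = negate (z n)
  · subst hx
    simp only [if_pos rfl, Equiv.swap_apply_def]
    split_ifs <;>
      (try rw [Equiv.swap_apply_of_ne_of_ne (by assumption) (by assumption)]) <;>
      first
      | rfl
      | simp_all [negate_negate, negate_eq_iff]
      | (exfalso; simp_all [negate_negate, negate_eq_iff])
  · rw [if_neg hx]
    simp only [Equiv.Perm.mul_apply, Equiv.swap_apply_def]
    split_ifs <;>
      (try rw [Equiv.swap_apply_of_ne_of_ne (by assumption) (by assumption)]) <;>
      first
      | rfl
      | simp_all [negate_negate, negate_eq_iff]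
      | (exfalso; simp_all [negate_negate, negate_eq_iff])


def emb (n : ℕ) : (Fin n × Bool) ≃ {y : Fin (n+1) × Bool // p n y} where
  toFun a := ⟨(a.1.castSucc, a.2), (Fin.castSucc_lt_last a.1).ne⟩
  invFun y := (y.1.1.castPred y.2, y.1.2)
  left_inv a := Prod.ext (Fin.ext rfl) rfl
  right_inv y := by cases y with | mk v h => cases v; exact Subtype.ext (Prod.ext (Fin.ext rfl) rfl)

lemma emb_negate (a : Fin n × Bool) :
    ((emb n) (negate a) : Fin (n+1) × Bool) = negate ((emb n) a) := rfl

/-- equivariance -/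
def Eqv {m : ℕ} (ρ : Equiv.Perm (Fin m × Bool)) : Prop :=
  ∀ y, ρ (negate y) = negate (ρ y)

noncomputable def ext (π' : Equiv.Perm (Fin n × Bool)) : Equiv.Perm (Fin (n+1) × Bool) :=
  π'.extendDomain (emb n)

lemma ext_z (π' : Equiv.Perm (Fin n × Bool)) : ext π' (z n) = z n :=
  Equiv.Perm.extendDomain_apply_not_subtype _ _ p_z

lemma ext_negate_z (π' : Equiv.Perm (Fin n × Bool)) : ext π' (negate (z n)) = negate (z n) :=
  Equiv.Perm.extendDomain_apply_not_subtype _ _ p_negate_z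

lemma ext_apply_emb (π' : Equiv.Perm (Fin n × Bool)) (a : Fin n × Bool) :
    ext π' ((emb n) a : Fin (n+1) × Bool) = ((emb n) (π' a) : Fin (n+1) × Bool) :=
  Equiv.Perm.extendDomain_apply_image _ _ _

lemma ext_p {π' : Equiv.Perm (Fin n × Bool)} {y : Fin (n+1) × Bool} (hy : p n y) :
    p n (ext π' y) := by
  rw [ext, Equiv.Perm.extendDomain_apply_subtype _ _ hy]
  exact Subtype.prop _

lemma ext_pow (π' : Equiv.Perm (Fin n × Bool)) (m : ℕ) :
    (ext π') ^ m = ext (π' ^ m) := by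
  rw [ext, ext, Equiv.Perm.extendDomain_pow]

lemma ext_eqv {π' : Equiv.Perm (Fin n × Bool)} (h : Eqv π') : Eqv (ext π') := by
  intro y
  by_cases hy : p n y
  · obtain ⟨a, rfl⟩ : ∃ a, ((emb n) a : Fin (n+1) × Bool) = y := ⟨(emb n).symm ⟨y, hy⟩, by simp⟩
    rw [← emb_negate, ext_apply_emb, ext_apply_emb, h, emb_negate]
  · rcases not_p_iff.mp hy with rfl | rfl
    · rw [ext_z, ext_negate_z]
    · rw [ext_negate_z, negate_negate, ext_z]

noncomputable def bwd (x : Fin (n+1) × Bool) (π' : Equiv.Perm (Fin n × Bool)) :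
    Equiv.Perm (Fin (n+1) × Bool) := ins x * ext π'

lemma ins_negate (x y : Fin (n+1) × Bool) : ins x (negate y) = negate (ins x y) := by
  rw [ins_apply, ins_apply]
  split_ifs <;> simp_all [negate_negate, negate_eq_iff] <;>
    simp_all [← negate_eq_iff, negate_negate]

lemma bwd_eqv {x : Fin (n+1) × Bool} {π' : Equiv.Perm (Fin n × Bool)} (h : Eqv π') :
    Eqv (bwd x π') := by
  intro y
  rw [bwd, Equiv.Perm.mul_apply, Equiv.Perm.mul_apply, ext_eqv h, ins_negate]

lemma bwd_z (x : Fin (n+1) × Bool) (π' : Equiv.Perm (Fin n × Bool)) :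
    bwd x π' (z n) = x := by
  rw [bwd, Equiv.Perm.mul_apply, ext_z, ins_apply, if_pos rfl]

lemma bwd_negate_z (x : Fin (n+1) × Bool) (π' : Equiv.Perm (Fin n × Bool)) :
    bwd x π' (negate (z n)) = negate x := by
  rw [bwd, Equiv.Perm.mul_apply, ext_negate_z, ins_apply,
    if_neg (negate_ne _), if_pos rfl]

lemma bwd_p {x y : Fin (n+1) × Bool} (π' : Equiv.Perm (Fin n × Bool)) (hy : p n y) :
    bwd x π' y = if ext π' y = x then z n
      else if ext π' y = negate x then negate (z n) else ext π' y := by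
  have h1 : ext π' y ≠ z n := fun hc => p_z (hc ▸ ext_p hy)
  have h2 : ext π' y ≠ negate (z n) := fun hc => p_negate_z (hc ▸ ext_p hy)
  rw [bwd, Equiv.Perm.mul_apply, ins_apply, if_neg h1, if_neg h2]

lemma sameCycle_of_fixed {β : Type*} {ρ : Equiv.Perm β} {a y : β} (h : ρ a = a) :
    ρ.SameCycle a y ↔ y = a := by
  constructor
  · rintro ⟨i, hi⟩
    rw [← hi, Equiv.Perm.zpow_apply_eq_self_of_apply_eq_self h]
  · rintro rfl; exact Equiv.Perm.SameCycle.refl _ _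

lemma sameCycle_negate {m : ℕ} {ρ : Equiv.Perm (Fin m × Bool)} (h : Eqv ρ)
    {a b : Fin m × Bool} : ρ.SameCycle (negate a) (negate b) ↔ ρ.SameCycle a b := by
  have hconj : (nu m) * ρ * (nu m)⁻¹ = ρ := by
    ext y : 1
    simp only [Equiv.Perm.mul_apply, nu_apply, nu_inv_apply]
    rw [h y, negate_negate]
  constructor
  · intro hs
    have := Equiv.Perm.SameCycle.conj (g := nu m) hs
    rw [hconj] at this
    simpa [negate_negate] using this
  · intro hs
    have h2 := Equiv.Perm.SameCycle.conj (g := nu m) hs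
    rw [hconj] at h2
    simpa using h2

section K
variable {x : Fin (n+1) × Bool} {π' : Equiv.Perm (Fin n × Bool)}

lemma K_fwd (hx : x ≠ z n) : ∀ m : ℕ, ∀ y w : Fin (n+1) × Bool, p n y → p n w →
    (bwd x π' ^ m) y = w → (ext π').SameCycle y w := by
  intro m
  induction m using Nat.strong_induction_on with
  | _ m IH =>
    match m with
    | 0 => intro y w hy hw h; rw [pow_zero] at h; exact h ▸ Equiv.Perm.SameCycle.refl _ _
    | Nat.succ m =>
      intro y w hy hw h
      rw [pow_succ', Equiv.Perm.mul_apply] at h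
      set v := (bwd x π' ^ m) y with hv
      by_cases hpv : p n v
      · have hs := bwd_p (x := x) π' hpv
        rw [h] at hs
        have hw' : w = ext π' v := by
          by_cases h1 : ext π' v = x
          · rw [if_pos h1] at hs; rw [hs] at hw; exact absurd hw p_z
          · by_cases h2 : ext π' v = negate x
            · rw [if_neg h1, if_pos h2] at hs; rw [hs] at hw; exact absurd hw p_negate_z
            · rw [if_neg h1, if_neg h2] at hs; exact hs
        exact (IH m (Nat.lt_succ_self m) y v hy hpv rfl).trans (hw' ▸ ⟨1, by simp⟩)
      · rcases not_p_iff.mp hpv with hvz | hvz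
        · have hwx : w = x := by rw [← h, hvz, bwd_z]
          match m, hv with
          | 0, hv =>
            have hy0 : y = z n := by rw [← hvz, hv, pow_zero, Equiv.Perm.one_apply]
            rw [hy0] at hy; exact absurd hy p_z
          | Nat.succ k, hv =>
            set u := (bwd x π' ^ k) y with hu'
            have hu : bwd x π' u = v := by rw [hv, pow_succ', Equiv.Perm.mul_apply]
            have hpu : p n u := by
              by_contra hpu
              rcases not_p_iff.mp hpu with h1 | h1
              · rw [h1, bwd_z] at hu; exact hx (hu.trans hvz)
              · rw [h1, bwd_negate_z] at hu
                have hxz : x = negate (z n) := by rw [← negate_negate x, hu, hvz]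
                have hwz : w = negate (z n) := hwx.trans hxz
                rw [hwz] at hw; exact p_negate_z hw
            have hs := bwd_p (x := x) π' hpu
            rw [hu, hvz] at hs
            have hex : ext π' u = x := by
              by_contra hc
              rw [if_neg hc] at hs
              by_cases h2 : ext π' u = negate x
              · rw [if_pos h2] at hs; exact negate_ne (z n) hs.symm
              · rw [if_neg h2] at hs; exact p_z (by rw [hs]; exact ext_p hpu)
            have hyu := IH k (by omega) y u hy hpu rfl
            rw [hwx, ← hex]
            exact hyu.trans ⟨1, by simp⟩
        · have hwx : w = negate x := by rw [← h, hvz, bwd_negate_z]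
          match m, hv with
          | 0, hv =>
            have hy0 : y = negate (z n) := by rw [← hvz, hv, pow_zero, Equiv.Perm.one_apply]
            rw [hy0] at hy; exact absurd hy p_negate_z
          | Nat.succ k, hv =>
            set u := (bwd x π' ^ k) y with hu'
            have hu : bwd x π' u = v := by rw [hv, pow_succ', Equiv.Perm.mul_apply]
            have hpu : p n u := by
              by_contra hpu
              rcases not_p_iff.mp hpu with h1 | h1
              · rw [h1, bwd_z] at hu
                have hxnz : x = negate (z n) := hu.trans hvz
                have hwz : w = z n := by rw [hwx, hxnz, negate_negate]
                rw [hwz] at hw; exact p_z hw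
              · rw [h1, bwd_negate_z] at hu
                exact hx (negate_inj (hu.trans hvz))
            have hs := bwd_p (x := x) π' hpu
            rw [hu, hvz] at hs
            have hex : ext π' u = negate x := by
              by_contra hc
              by_cases h2 : ext π' u = x
              · rw [if_pos h2] at hs; exact negate_ne (z n) hs
              · rw [if_neg h2, if_neg hc] at hs
                exact p_negate_z (by rw [hs]; exact ext_p hpu)
            have hyu := IH k (by omega) y u hy hpu rfl
            rw [hwx, ← hex]
            exact hyu.trans ⟨1, by simp⟩

lemma K_bwd : ∀ m : ℕ, ∀ y : Fin (n+1) × Bool, p n y →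
    (bwd x π').SameCycle y ((ext π' ^ m) y) := by
  intro m
  induction m with
  | zero => intro y hy; rw [pow_zero]; exact Equiv.Perm.SameCycle.refl _ _
  | succ m IH =>
    intro y hy
    rw [pow_succ', Equiv.Perm.mul_apply]
    set v := (ext π' ^ m) y with hv
    have hpv : p n v := by
      rw [hv, ext_pow]; exact ext_p hy
    refine (IH y hy).trans ?_
    have hs := bwd_p (x := x) π' hpv
    by_cases h1 : ext π' v = x
    · rw [if_pos h1] at hs
      exact Equiv.Perm.SameCycle.trans (y := z n) ⟨1, by rw [zpow_one]; exact hs⟩ ⟨1, by simp [bwd_z, h1]⟩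
    · by_cases h2 : ext π' v = negate x
      · rw [if_neg h1, if_pos h2] at hs
        exact Equiv.Perm.SameCycle.trans (y := negate (z n)) ⟨1, by rw [zpow_one]; exact hs⟩
          ⟨1, by simp [bwd_negate_z, h2]⟩
      · rw [if_neg h1, if_neg h2] at hs
        exact ⟨1, by rw [zpow_one]; exact hs⟩

lemma K1 (hx : x ≠ z n) {y w : Fin (n+1) × Bool} (hy : p n y) (hw : p n w) :
    (bwd x π').SameCycle y w ↔ (ext π').SameCycle y w := by
  constructor
  · intro h
    obtain ⟨i, _, hi⟩ := h.exists_pow_eq'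
    exact K_fwd hx i y w hy hw hi
  · intro h
    obtain ⟨i, _, hi⟩ := h.exists_pow_eq'
    exact hi ▸ K_bwd i y hy

lemma K2 (hpx : p n x) {y : Fin (n+1) × Bool} (hy : p n y) :
    (bwd x π').SameCycle (z n) y ↔ (ext π').SameCycle x y := by
  have hx : x ≠ z n := fun hc => p_z (by rw [← hc]; exact hpx)
  have hzx : (bwd x π').SameCycle (z n) x := ⟨1, by simp [bwd_z]⟩
  constructor
  · intro h
    exact (K1 hx hpx hy).mp (hzx.symm.trans h)
  · intro h
    exact hzx.trans ((K1 hx hpx hy).mpr h)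

lemma K3 (hpx : p n x) :
    (bwd x π').SameCycle (z n) (negate (z n)) ↔ (ext π').SameCycle x (negate x) := by
  have hx : x ≠ z n := fun hc => p_z (by rw [← hc]; exact hpx)
  have hzx : (bwd x π').SameCycle (z n) x := ⟨1, by simp [bwd_z]⟩
  have hnz : (bwd x π').SameCycle (negate (z n)) (negate x) := ⟨1, by simp [bwd_negate_z]⟩
  constructor
  · intro h
    exact (K1 hx hpx (p_negate_iff.mpr hpx)).mp (hzx.symm.trans (h.trans hnz))
  · intro h
    exact (hzx.trans ((K1 hx hpx (p_negate_iff.mpr hpx)).mpr h)).trans hnz.symm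

lemma Kneg {y : Fin (n+1) × Bool} :
    (bwd (negate (z n)) π').SameCycle (z n) y ↔ (y = z n ∨ y = negate (z n)) := by
  constructor
  · intro h
    have key : ∀ i : ℕ, (bwd (negate (z n)) π' ^ i) (z n) = z n ∨
        (bwd (negate (z n)) π' ^ i) (z n) = negate (z n) := by
      intro i
      induction i with
      | zero => left; simp
      | succ k IHk =>
        rw [pow_succ', Equiv.Perm.mul_apply]
        rcases IHk with h | h
        · right; rw [h, bwd_z]
        · left; rw [h, bwd_negate_z, negate_negate]
    obtain ⟨i, _, hi⟩ := h.exists_pow_eq'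
    rw [← hi]
    exact key i
  · rintro (rfl | rfl)
    · exact Equiv.Perm.SameCycle.refl _ _
    · exact ⟨1, by simp [bwd_z]⟩

lemma sameCycle_ext_z {y : Fin (n+1) × Bool} :
    (ext π').SameCycle (z n) y ↔ y = z n := sameCycle_of_fixed (ext_z π')

lemma sameCycle_ext_negate_z {y : Fin (n+1) × Bool} :
    (ext π').SameCycle (negate (z n)) y ↔ y = negate (z n) :=
  sameCycle_of_fixed (ext_negate_z π')

lemma sameCycle_ext_p {y w : Fin (n+1) × Bool} (hy : p n y)
    (h : (ext π').SameCycle y w) : p n w := by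
  by_contra hw
  rcases not_p_iff.mp hw with rfl | rfl
  · exact p_z (by rw [← sameCycle_ext_z.mp h.symm]; exact hy)
  · exact p_negate_z (by rw [← sameCycle_ext_negate_z.mp h.symm]; exact hy)

lemma sameCycle_emb {a b : Fin n × Bool} :
    (ext π').SameCycle ((emb n) a : Fin (n+1) × Bool) ((emb n) b : Fin (n+1) × Bool) ↔
      π'.SameCycle a b := Equiv.Perm.sameCycle_extendDomain

lemma image_orbit (a₀ : Fin n × Bool) :
    (fun a => ((emb n) a : Fin (n+1) × Bool)) '' {b | π'.SameCycle a₀ b} =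
      {y | (ext π').SameCycle ((emb n) a₀ : Fin (n+1) × Bool) y} := by
  ext y
  constructor
  · rintro ⟨b, hb, rfl⟩
    exact sameCycle_emb.mpr hb
  · intro hy
    have hpy : p n y := sameCycle_ext_p (Subtype.prop _) hy
    refine ⟨(emb n).symm ⟨y, hpy⟩, ?_, by simp⟩
    have : y = ((emb n) ((emb n).symm ⟨y, hpy⟩) : Fin (n+1) × Bool) := by simp
    rw [this] at hy
    exact sameCycle_emb.mp hy

end K

abbrev OddOrbits {m : ℕ} (ρ : Equiv.Perm (Fin m × Bool)) : Type :=
  {O : Set (Fin m × Bool) //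
      (∃ x, O = {y | ρ.SameCycle x y}) ∧ ∀ y ∈ O, negate y ∉ O}

instance {m : ℕ} (ρ : Equiv.Perm (Fin m × Bool)) : Finite (OddOrbits ρ) := by
  unfold OddOrbits; infer_instance

section Ext
variable {π' : Equiv.Perm (Fin n × Bool)}

/-- the embedding map on points -/
noncomputable def embPt (a : Fin n × Bool) : Fin (n+1) × Bool := ((emb n) a : Fin (n+1) × Bool)

lemma embPt_inj : Function.Injective (embPt (n := n)) :=
  fun a b hab => (emb n).injective (Subtype.val_injective hab)

lemma p_embPt (a : Fin n × Bool) : p n (embPt a) := Subtype.prop _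

lemma embPt_negate (a : Fin n × Bool) : embPt (negate a) = negate (embPt a) := rfl

/-- forward map for the extension counting bijection -/
noncomputable def extOrb (π' : Equiv.Perm (Fin n × Bool)) :
    OddOrbits π' ⊕ Bool → OddOrbits (ext π')
  | Sum.inl O =>
      ⟨embPt '' O.val, by
        obtain ⟨a₀, ha₀⟩ := O.prop.1
        exact ⟨embPt a₀, by rw [ha₀]; exact image_orbit a₀⟩, by
        rintro y ⟨a, ha, rfl⟩ ⟨b, hb, hba⟩
        rw [← embPt_negate] at hba
        rw [embPt_inj hba] at hb
        exact O.prop.2 a ha hb⟩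
  | Sum.inr true => ⟨{z n}, ⟨z n, by ext y; simp [sameCycle_ext_z, eq_comm]⟩, by
      rintro y rfl hy
      simp only [Set.mem_singleton_iff] at hy
      exact negate_ne _ hy⟩
  | Sum.inr false => ⟨{negate (z n)}, ⟨negate (z n), by
      ext y; simp [sameCycle_ext_negate_z, eq_comm]⟩, by
      rintro y rfl hy
      simp only [Set.mem_singleton_iff] at hy
      exact negate_ne _ (negate_inj hy)⟩

lemma orbit_nonempty {m : ℕ} {ρ : Equiv.Perm (Fin m × Bool)} (O : OddOrbits ρ) :
    O.val.Nonempty := by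
  obtain ⟨x₀, hx₀⟩ := O.prop.1
  exact ⟨x₀, by rw [hx₀]; exact Equiv.Perm.SameCycle.refl _ _⟩

lemma extOrb_ne_z (O : OddOrbits π') (b : Fin n × Bool) (hb : b ∈ O.val)
    {w : Fin (n+1) × Bool} (hw : ¬ p n w) : embPt '' O.val ≠ ({w} : Set _) := by
  intro hc
  have : embPt b ∈ ({w} : Set _) := by rw [← hc]; exact ⟨b, hb, rfl⟩
  simp only [Set.mem_singleton_iff] at this
  exact hw (this ▸ p_embPt b)

lemma extOrb_bijective : Function.Bijective (extOrb π') := by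
  constructor
  · rintro (O1 | b1) (O2 | b2) h <;>
      simp only [extOrb, Subtype.mk.injEq] at h
    · congr 1
      obtain ⟨b, hb⟩ := orbit_nonempty O1
      exact Subtype.ext (Set.image_injective.mpr embPt_inj h)
    · exfalso
      obtain ⟨b, hb⟩ := orbit_nonempty O1
      cases b2 <;> simp only [Subtype.mk.injEq] at h <;>
        [exact extOrb_ne_z O1 b hb p_negate_z h; exact extOrb_ne_z O1 b hb p_z h]
    · exfalso
      obtain ⟨b, hb⟩ := orbit_nonempty O2
      cases b1 <;> simp only [Subtype.mk.injEq] at h <;>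
        [exact extOrb_ne_z O2 b hb p_negate_z h.symm; exact extOrb_ne_z O2 b hb p_z h.symm]
    · cases b1 <;> cases b2 <;> simp only [Subtype.mk.injEq] at h <;> try rfl
      · exact absurd (Set.singleton_eq_singleton_iff.mp h) (fun hc => negate_ne _ hc)
      · exact absurd (Set.singleton_eq_singleton_iff.mp h) (fun hc => negate_ne _ hc.symm)
  · rintro ⟨O, hO1, hO2⟩
    obtain ⟨x₀, rfl⟩ := hO1
    by_cases hp : p n x₀
    · have hx : x₀ = embPt ((emb n).symm ⟨x₀, hp⟩) := by simp [embPt]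
      refine ⟨Sum.inl ⟨{b | π'.SameCycle ((emb n).symm ⟨x₀, hp⟩) b}, ⟨_, rfl⟩, ?_⟩, ?_⟩
      · intro b hb hnb
        have h1 : embPt b ∈ {y | (ext π').SameCycle x₀ y} := by
          rw [hx]; exact sameCycle_emb.mpr hb
        have h2 : embPt (negate b) ∈ {y | (ext π').SameCycle x₀ y} := by
          rw [hx]; exact sameCycle_emb.mpr hnb
        rw [embPt_negate] at h2
        exact hO2 _ h1 h2
      · apply Subtype.ext
        simp only [extOrb]
        show embPt '' {b | π'.SameCycle ((emb n).symm ⟨x₀, hp⟩) b} = _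
        rw [show (embPt '' {b | π'.SameCycle ((emb n).symm ⟨x₀, hp⟩) b} : Set _) =
          {y | (ext π').SameCycle (embPt ((emb n).symm ⟨x₀, hp⟩)) y} from image_orbit _, ← hx]
    · rcases not_p_iff.mp hp with rfl | rfl
      · refine ⟨Sum.inr true, Subtype.ext ?_⟩
        show ({z n} : Set _) = _
        ext y; simp [sameCycle_ext_z, eq_comm]
      · refine ⟨Sum.inr false, Subtype.ext ?_⟩
        show ({negate (z n)} : Set _) = _
        ext y; simp [sameCycle_ext_negate_z, eq_comm]

lemma card_oddOrbits_ext :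
    Nat.card (OddOrbits (ext π')) = Nat.card (OddOrbits π') + 2 := by
  rw [← Nat.card_congr (Equiv.ofBijective _ extOrb_bijective), Nat.card_sum]
  simp [Nat.card_eq_fintype_card]

end Ext


lemma orbit_eq_of_sameCycle {β : Type*} {ρ : Equiv.Perm β} {a b : β}
    (h : ρ.SameCycle a b) : {y | ρ.SameCycle a y} = {y | ρ.SameCycle b y} := by
  ext y
  exact ⟨fun hy => h.symm.trans hy, fun hy => h.trans hy⟩

section Ins2
variable {x : Fin (n+1) × Bool} {π' : Equiv.Perm (Fin n × Bool)}

lemma good_witness (hx : x ≠ z n) (P : OddOrbits (bwd x π')) :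
    ∃ y₀, p n y₀ ∧ P.val = {y | (bwd x π').SameCycle y₀ y} := by
  obtain ⟨x₀, hx₀⟩ := P.prop.1
  by_cases hp : p n x₀
  · exact ⟨x₀, hp, hx₀⟩
  · have hxnz : x ≠ negate (z n) := by
      rintro rfl
      rcases not_p_iff.mp hp with rfl | rfl
      · refine P.prop.2 (z n) ?_ ?_
        · rw [hx₀]; exact Equiv.Perm.SameCycle.refl _ _
        · rw [hx₀]; exact ⟨1, by simp [bwd_z]⟩
      · refine P.prop.2 (negate (z n)) ?_ ?_
        · rw [hx₀]; exact Equiv.Perm.SameCycle.refl _ _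
        · rw [negate_negate, hx₀]
          exact Equiv.Perm.SameCycle.symm
            (⟨1, by simp [bwd_z]⟩ : (bwd (negate (z n)) π').SameCycle (z n) (negate (z n)))
    have hpx : p n x := by
      by_contra hc
      rcases not_p_iff.mp hc with rfl | h1
      · exact hx rfl
      · exact hxnz h1
    rcases not_p_iff.mp hp with rfl | rfl
    · refine ⟨x, hpx, ?_⟩
      rw [hx₀]
      exact orbit_eq_of_sameCycle ⟨1, by simp [bwd_z]⟩
    · refine ⟨negate x, p_negate_iff.mpr hpx, ?_⟩
      rw [hx₀]
      exact orbit_eq_of_sameCycle ⟨1, by simp [bwd_negate_z]⟩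

lemma orbit_diff (hx : x ≠ z n) {y₀ : Fin (n+1) × Bool} (hy₀ : p n y₀) :
    {y | (bwd x π').SameCycle y₀ y} \ {z n, negate (z n)} =
      {w | (ext π').SameCycle y₀ w} := by
  ext w
  simp only [Set.mem_diff, Set.mem_setOf_eq, Set.mem_insert_iff, Set.mem_singleton_iff]
  constructor
  · rintro ⟨h1, h2⟩
    have hpw : p n w := by by_contra hc; exact h2 (not_p_iff.mp hc)
    exact (K1 hx hy₀ hpw).mp h1
  · intro h
    have hpw : p n w := sameCycle_ext_p hy₀ h
    refine ⟨(K1 hx hy₀ hpw).mpr h, ?_⟩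
    rintro (rfl | rfl)
    exacts [p_z hpw, p_negate_z hpw]

/-- the insertion counting bijection -/
noncomputable def insOrb (hx : x ≠ z n) :
    OddOrbits (bwd x π') ⊕ Bool → OddOrbits (ext π')
  | Sum.inl P => ⟨P.val \ {z n, negate (z n)}, by
      obtain ⟨y₀, hy₀, hPval⟩ := good_witness hx P
      exact ⟨y₀, by rw [hPval, orbit_diff hx hy₀]⟩,
      fun y hy hny => P.prop.2 y hy.1 hny.1⟩
  | Sum.inr b => extOrb π' (Sum.inr b)

lemma insOrb_bijective (hx : x ≠ z n) :
    Function.Bijective (insOrb (π' := π') hx) := by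
  constructor
  · have hinl : ∀ P : OddOrbits (bwd x π'),
        ((insOrb (π' := π') hx) (Sum.inl P)).val = P.val \ {z n, negate (z n)} :=
      fun P => rfl
    have hne : ∀ (P : OddOrbits (bwd x π')) (w : Fin (n+1) × Bool), ¬ p n w →
        P.val \ {z n, negate (z n)} ≠ ({w} : Set _) := by
      intro P w hw hc
      have hwmem : w ∈ P.val \ {z n, negate (z n)} := by rw [hc]; rfl
      exact hwmem.2 (not_p_iff.mp hw)
    rintro (P1 | b1) (P2 | b2) h
    · obtain ⟨y₁, hy₁, hP1⟩ := good_witness hx P1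
      obtain ⟨y₂, hy₂, hP2⟩ := good_witness hx P2
      have hval : P1.val \ {z n, negate (z n)} = P2.val \ {z n, negate (z n)} := by
        rw [← hinl P1, ← hinl P2, h]
      have hy₁m : y₁ ∈ P2.val := by
        have h1 : y₁ ∈ P1.val \ {z n, negate (z n)} := by
          refine ⟨by rw [hP1]; exact Equiv.Perm.SameCycle.refl _ _, ?_⟩
          rintro (rfl | rfl)
          exacts [p_z hy₁, p_negate_z hy₁]
        rw [hval] at h1
        exact h1.1
      rw [hP2] at hy₁m
      congr 1
      apply Subtype.ext
      rw [hP1, hP2, orbit_eq_of_sameCycle hy₁m]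
    · exfalso
      have hval := congrArg Subtype.val h
      cases b2
      · exact hne P1 _ p_negate_z hval
      · exact hne P1 _ p_z hval
    · exfalso
      have hval := congrArg Subtype.val h
      cases b1
      · exact hne P2 _ p_negate_z hval.symm
      · exact hne P2 _ p_z hval.symm
    · cases b1 <;> cases b2 <;> first
        | rfl
        | (exfalso
           have hval := congrArg Subtype.val h
           simp only [insOrb, extOrb] at hval
           have hc := Set.singleton_eq_singleton_iff.mp hval
           first
           | exact negate_ne _ hc.symm
           | exact negate_ne _ hc)
  · rintro ⟨O, hO1, hO2⟩
    obtain ⟨x₀, rfl⟩ := hO1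
    by_cases hp : p n x₀
    · have hPodd : ∀ y ∈ {y | (bwd x π').SameCycle x₀ y},
          negate y ∉ {y | (bwd x π').SameCycle x₀ y} := by
        have key : (bwd x π').SameCycle x₀ (z n) →
            (bwd x π').SameCycle x₀ (negate (z n)) → False := by
          intro h1 h2
          by_cases hxz : x = negate (z n)
          · subst hxz
            rcases Kneg.mp h1.symm with hc | hc <;> rw [hc] at hp
            · exact p_z hp
            · exact p_negate_z hp
          · have hpx : p n x := by
              by_contra hc
              rcases not_p_iff.mp hc with h3 | h3
              exacts [hx h3, hxz h3]
            have e1 : (ext π').SameCycle x x₀ := (K2 hpx hp).mp h1.symm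
            have e2 : (ext π').SameCycle x (negate x) := (K3 hpx).mp (h1.symm.trans h2)
            exact hO2 x e1.symm (e1.symm.trans e2)
        intro y hy hny
        simp only [Set.mem_setOf_eq] at hy hny
        by_cases hpy : p n y
        · exact hO2 y ((K1 hx hp hpy).mp hy) ((K1 hx hp (p_negate_iff.mpr hpy)).mp hny)
        · rcases not_p_iff.mp hpy with rfl | rfl
          · exact key hy hny
          · rw [negate_negate] at hny
            exact key hny hy
      refine ⟨Sum.inl ⟨{y | (bwd x π').SameCycle x₀ y}, ⟨x₀, rfl⟩, hPodd⟩,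
        Subtype.ext ?_⟩
      show {y | (bwd x π').SameCycle x₀ y} \ {z n, negate (z n)} = _
      rw [orbit_diff hx hp]
    · rcases not_p_iff.mp hp with rfl | rfl
      · refine ⟨Sum.inr true, Subtype.ext ?_⟩
        show ({z n} : Set _) = _
        ext y; simp [sameCycle_ext_z, eq_comm]
      · refine ⟨Sum.inr false, Subtype.ext ?_⟩
        show ({negate (z n)} : Set _) = _
        ext y; simp [sameCycle_ext_negate_z, eq_comm]

lemma card_oddOrbits_bwd (hx : x ≠ z n) :
    Nat.card (OddOrbits (ext π')) = Nat.card (OddOrbits (bwd x π')) + 2 := by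
  rw [← Nat.card_congr (Equiv.ofBijective _ (insOrb_bijective (π' := π') hx)), Nat.card_sum]
  simp [Nat.card_eq_fintype_card]

end Ins2

lemma occ {m : ℕ} (ρ : Equiv.Perm (Fin m × Bool)) :
    oddCycleCount ρ = Nat.card (OddOrbits ρ) / 2 := rfl

lemma ins_z_eq : ins (z n) = 1 := by
  unfold ins
  rw [if_neg (ne_negate _), Equiv.swap_self, Equiv.swap_self]
  rfl

lemma bwd_z_eq (π' : Equiv.Perm (Fin n × Bool)) : bwd (z n) π' = ext π' := by
  rw [bwd, ins_z_eq, one_mul]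

lemma occ_bwd (x : Fin (n+1) × Bool) (π' : Equiv.Perm (Fin n × Bool)) :
    oddCycleCount (bwd x π') = oddCycleCount π' + (if x = z n then 1 else 0) := by
  by_cases hx : x = z n
  · subst hx
    rw [if_pos rfl, bwd_z_eq, occ, occ, card_oddOrbits_ext, Nat.add_div_right _ (by norm_num)]
  · have h1 := card_oddOrbits_ext (π' := π')
    have h2 := card_oddOrbits_bwd (π' := π') hx
    have h3 : Nat.card (OddOrbits (bwd x π')) = Nat.card (OddOrbits π') := by omega
    rw [if_neg hx, add_zero, occ, occ, h3]

lemma eqv_one {m : ℕ} : Eqv (1 : Equiv.Perm (Fin m × Bool)) := fun _ => rfl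

lemma eqv_mul {m : ℕ} {σ τ : Equiv.Perm (Fin m × Bool)} (hσ : Eqv σ) (hτ : Eqv τ) :
    Eqv (σ * τ) := fun y => by
  rw [Equiv.Perm.mul_apply, Equiv.Perm.mul_apply, hτ, hσ]

lemma eqv_inv {m : ℕ} {σ : Equiv.Perm (Fin m × Bool)} (hσ : Eqv σ) : Eqv σ⁻¹ := fun y => by
  apply σ.injective
  rw [← Equiv.Perm.mul_apply, mul_inv_cancel, Equiv.Perm.one_apply, hσ, ← Equiv.Perm.mul_apply, mul_inv_cancel, Equiv.Perm.one_apply]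

lemma eqv_ins (x : Fin (n+1) × Bool) : Eqv (ins x) := fun y => ins_negate x y

/-- the underlying type of signed permutations -/
abbrev SPt (m : ℕ) : Type := {ρ : Equiv.Perm (Fin m × Bool) // Eqv ρ}

instance (m : ℕ) : Finite (SPt m) := by unfold SPt; infer_instance

noncomputable def masterFun (n : ℕ) : (Fin (n+1) × Bool) × SPt n → SPt (n+1) :=
  fun q => ⟨bwd q.1 q.2.val, bwd_eqv q.2.prop⟩

lemma ext_injective {σ τ : Equiv.Perm (Fin n × Bool)} (h : ext σ = ext τ) : σ = τ :=
  Equiv.Perm.extendDomainHom_injective (emb n) h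

lemma masterFun_bijective : Function.Bijective (masterFun n) := by
  constructor
  · rintro ⟨x₁, π₁, hπ₁⟩ ⟨x₂, π₂, hπ₂⟩ h
    have hval : bwd x₁ π₁ = bwd x₂ π₂ := congrArg Subtype.val h
    have hx : x₁ = x₂ := by rw [← bwd_z x₁ π₁, ← bwd_z x₂ π₂, hval]
    subst hx
    have hext : ext π₁ = ext π₂ := by
      have := hval
      rw [bwd, bwd] at this
      exact mul_left_cancel this
    have := ext_injective hext
    subst this
    rfl
  · rintro ⟨π, hπ⟩
    set x := π (z n) with hxdef
    set ρ := (ins x)⁻¹ * π with hρdef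
    have hρeqv : Eqv ρ := eqv_mul (eqv_inv (eqv_ins x)) hπ
    have hρz : ρ (z n) = z n := by
      have hiz : ins x (z n) = x := by rw [ins_apply, if_pos rfl]
      rw [hρdef, Equiv.Perm.mul_apply, ← hxdef]
      exact (Equiv.symm_apply_eq _).mpr hiz.symm
    have hρnz : ρ (negate (z n)) = negate (z n) := by
      rw [hρdef, Equiv.Perm.mul_apply, hπ, ← hxdef]
      have : ins x (negate (z n)) = negate x := by
        rw [ins_apply, if_neg (fun hc => (ne_negate (z n)) hc.symm), if_pos rfl]
      exact (Equiv.symm_apply_eq _).mpr this.symm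
    have hpres : ∀ y, p n y ↔ p n (ρ y) := by
      intro y
      constructor
      · intro hy
        by_contra hc
        rcases not_p_iff.mp hc with hc' | hc'
        · rw [← hρz] at hc'
          rw [ρ.injective hc'] at hy
          exact p_z hy
        · rw [← hρnz] at hc'
          rw [ρ.injective hc'] at hy
          exact p_negate_z hy
      · intro hy
        by_contra hc
        rcases not_p_iff.mp hc with rfl | rfl
        · rw [hρz] at hy; exact p_z hy
        · rw [hρnz] at hy; exact p_negate_z hy
    set π' := ((emb n).symm).permCongr (ρ.subtypePerm (fun y => (hpres y).symm)) with hπ'def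
    have hπ'apply : ∀ a, embPt (π' a) = ρ (embPt a) := by
      intro a
      rw [hπ'def, Equiv.permCongr_apply]
      simp only [Equiv.symm_symm, Equiv.apply_symm_apply]
      show (((emb n) ((emb n).symm ((ρ.subtypePerm (fun y => (hpres y).symm)) ((emb n) a)))) :
        Fin (n+1) × Bool) = _
      rw [Equiv.apply_symm_apply]
      rfl
    have hext : ext π' = ρ := by
      apply Equiv.ext
      intro y
      by_cases hy : p n y
      · have hy' : y = embPt ((emb n).symm ⟨y, hy⟩) := by simp [embPt]
        rw [hy']
        have : ext π' (embPt ((emb n).symm ⟨y, hy⟩)) = embPt (π' ((emb n).symm ⟨y, hy⟩)) :=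
          ext_apply_emb π' _
        rw [this, hπ'apply]
      · rcases not_p_iff.mp hy with rfl | rfl
        · rw [ext_z, hρz]
        · rw [ext_negate_z, hρnz]
    have hπ'eqv : Eqv π' := by
      intro a
      apply embPt_inj
      rw [hπ'apply, embPt_negate, embPt_negate, hπ'apply, hρeqv]
    refine ⟨⟨x, ⟨π', hπ'eqv⟩⟩, ?_⟩
    apply Subtype.ext
    show bwd x π' = π
    rw [bwd, hext, hρdef, ← mul_assoc, mul_inv_cancel, one_mul]

noncomputable def master (n : ℕ) : (Fin (n+1) × Bool) × SPt n ≃ SPt (n+1) :=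
  Equiv.ofBijective _ masterFun_bijective


noncomputable def SPC (m j : ℕ) : ℕ :=
  Nat.card {σ : SPt m // oddCycleCount σ.val = j}

lemma occ_dim0 (ρ : Equiv.Perm (Fin 0 × Bool)) : oddCycleCount ρ = 0 := by
  have : IsEmpty (OddOrbits ρ) := ⟨fun O => (O.prop.1.choose.1).elim0⟩
  rw [occ, Nat.card_of_isEmpty]

lemma SPC_zero_zero : SPC 0 0 = 1 := by
  have hu : Unique {σ : SPt 0 // oddCycleCount σ.val = 0} := by
    refine ⟨⟨⟨⟨1, eqv_one⟩, occ_dim0 _⟩⟩, ?_⟩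
    rintro ⟨⟨ρ, hρ⟩, h⟩
    have : ρ = 1 := Subsingleton.elim _ _
    subst this
    rfl
  exact Nat.card_unique

lemma SPC_zero_succ (j : ℕ) : SPC 0 (j+1) = 0 := by
  have : IsEmpty {σ : SPt 0 // oddCycleCount σ.val = j+1} :=
    ⟨fun σ => by have h := σ.prop; rw [occ_dim0] at h; exact (Nat.succ_ne_zero j) h.symm⟩
  exact Nat.card_of_isEmpty

noncomputable def splitEquiv (j : ℕ) :
    {q : (Fin (n+1) × Bool) × SPt n //
        oddCycleCount q.2.val + (if q.1 = z n then 1 else 0) = j} ≃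
      {π' : SPt n // oddCycleCount π'.val + 1 = j} ⊕
        ({x : Fin (n+1) × Bool // x ≠ z n} × {π' : SPt n // oddCycleCount π'.val = j}) where
  toFun q :=
    if hx : q.val.1 = z n then Sum.inl ⟨q.val.2, by have := q.prop; rw [if_pos hx] at this; exact this⟩
    else Sum.inr ⟨⟨q.val.1, hx⟩, ⟨q.val.2, by have := q.prop; rw [if_neg hx, add_zero] at this; exact this⟩⟩
  invFun s := match s with
    | Sum.inl π' => ⟨⟨z n, π'.val⟩, by simpa using π'.prop⟩
    | Sum.inr ⟨x, π'⟩ => ⟨⟨x.val, π'.val⟩, by simp [x.prop, π'.prop]⟩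
  left_inv := by
    rintro ⟨⟨x, π'⟩, h⟩
    by_cases hx : x = z n <;> simp [hx]
  right_inv := by
    rintro (π' | ⟨x, π'⟩)
    · simp
    · simp [x.prop]

lemma SPC_succ (j : ℕ) :
    SPC (n+1) j = (match j with | 0 => 0 | Nat.succ jj => SPC n jj) + (2*n+1) * SPC n j := by
  have e1 : {σ : SPt (n+1) // oddCycleCount σ.val = j} ≃
      {q : (Fin (n+1) × Bool) × SPt n //
        oddCycleCount q.2.val + (if q.1 = z n then 1 else 0) = j} :=
    (Equiv.subtypeEquiv (master n) (fun q => by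
      show _ ↔ oddCycleCount (bwd q.1 q.2.val) = j
      rw [occ_bwd])).symm
  have hcount := Nat.card_congr (e1.trans (splitEquiv j))
  rw [SPC, hcount, Nat.card_sum, Nat.card_prod]
  have hxcard : Nat.card {x : Fin (n+1) × Bool // x ≠ z n} = 2*n+1 := by
    rw [Nat.card_eq_fintype_card, Fintype.card_subtype_compl, Fintype.card_subtype_eq]
    simp only [Fintype.card_prod, Fintype.card_fin, Fintype.card_bool]
    omega
  rw [hxcard]
  congr 1
  match j with
  | 0 =>
    have : IsEmpty {π' : SPt n // oddCycleCount π'.val + 1 = 0} :=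
      ⟨fun π' => Nat.succ_ne_zero _ π'.prop⟩
    exact Nat.card_of_isEmpty
  | Nat.succ jj =>
    exact Nat.card_congr (Equiv.subtypeEquivRight (fun π' =>
      ⟨fun h => Nat.succ_injective h, fun h => congrArg Nat.succ h⟩))

/-- the type-B Stirling-like numbers -/
def B : ℕ → ℕ → ℕ
  | 0, 0 => 1
  | 0, _+1 => 0
  | n+1, 0 => (2*n+1) * B n 0
  | n+1, j+1 => B n j + (2*n+1) * B n (j+1)

lemma SPC_eq_B : ∀ n j, SPC n j = B n j := by
  intro n
  induction n with
  | zero => intro j; cases j; exacts [SPC_zero_zero, SPC_zero_succ _]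
  | succ n IH =>
    intro j
    rw [SPC_succ]
    cases j <;> simp [B, IH]

lemma B_eq_zero : ∀ n j, n < j → B n j = 0 := by
  intro n
  induction n with
  | zero => intro j hj; match j, hj with | j+1, _ => rfl
  | succ n IH =>
    intro j hj
    match j, hj with
    | j+1, hj =>
      show B n j + (2*n+1) * B n (j+1) = 0
      rw [IH j (by omega), IH (j+1) (by omega), mul_zero, add_zero]

open Polynomial in
noncomputable def Pb (n : ℕ) : Polynomial ℤ :=
  ∏ i ∈ Finset.Icc 1 n, (Polynomial.X - Polynomial.C (2 * (i : ℤ) - 1))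

open Polynomial in
lemma Pb_succ (n : ℕ) : Pb (n+1) = Pb n * (X - C (2 * ((n+1 : ℕ) : ℤ) - 1)) := by
  rw [Pb, Pb, Finset.prod_Icc_succ_top (Nat.one_le_iff_ne_zero.mpr (Nat.succ_ne_zero n))]

open Polynomial in
lemma coeff_Pb : ∀ n j, (Pb n).coeff j = (-1:ℤ)^(n-j) * (B n j : ℤ) := by
  intro n
  induction n with
  | zero =>
    intro j
    have : Pb 0 = 1 := by rw [Pb]; simp
    rw [this]
    cases j with
    | zero => simp [B]
    | succ j => simp [B, coeff_one]
  | succ n IH =>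
    intro j
    have hc : 2 * ((n+1 : ℕ) : ℤ) - 1 = 2*(n:ℤ)+1 := by push_cast; ring
    rw [Pb_succ, hc]
    cases j with
    | zero =>
      rw [Polynomial.mul_coeff_zero, coeff_sub, coeff_X_zero, coeff_C_zero, IH 0]
      show (-1:ℤ)^n * (B n 0 : ℤ) * (0 - (2*(n:ℤ)+1)) = (-1:ℤ)^(n+1) * ((2*n+1) * B n 0 : ℕ)
      rw [pow_succ]
      push_cast
      ring
    | succ k =>
      rw [coeff_mul_X_sub_C, IH k, IH (k+1)]
      show _ = (-1:ℤ)^(n+1-(k+1)) * ((B n k + (2*n+1) * B n (k+1) : ℕ) : ℤ)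
      rcases Nat.lt_or_ge k n with hk | hk
      · have h1 : n - k = (n - (k+1)) + 1 := by omega
        have h2 : n + 1 - (k+1) = n - k := by omega
        rw [h2, h1, pow_succ]
        push_cast
        ring
      · have hz1 : B n (k+1) = 0 := B_eq_zero n (k+1) (by omega)
        rcases Nat.eq_or_lt_of_le hk with heq | hlt
        · subst heq
          rw [hz1, Nat.sub_self, Nat.sub_self]
          push_cast
          ring
        · have hz2 : B n k = 0 := B_eq_zero n k hlt
          rw [hz1, hz2]
          push_cast
          ring

end SPaux

theorem abs_coeff_eq_card_signed_perms_odd_cycles (n j : ℕ) (hn : 1 ≤ n)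
    (hj : j ≤ n) :
    ((∏ i ∈ Finset.Icc 1 n,
        (Polynomial.X - Polynomial.C (2 * (i : ℤ) - 1))).coeff j).natAbs =
      Nat.card {π : Equiv.Perm (Fin n × Bool) //
        (∀ x, π (negate x) = negate (π x)) ∧ oddCycleCount π = j} := by
  have hL : ((∏ i ∈ Finset.Icc 1 n,
      (Polynomial.X - Polynomial.C (2 * (i : ℤ) - 1))).coeff j).natAbs = SPaux.B n j := by
    rw [show (∏ i ∈ Finset.Icc 1 n,
      (Polynomial.X - Polynomial.C (2 * (i : ℤ) - 1))) = SPaux.Pb n from rfl]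
    rw [SPaux.coeff_Pb n j]
    rcases Nat.even_or_odd (n - j) with h | h
    · rw [h.neg_one_pow, one_mul, Int.natAbs_natCast]
    · rw [h.neg_one_pow, neg_one_mul, Int.natAbs_neg, Int.natAbs_natCast]
  rw [hL, ← SPaux.SPC_eq_B, SPaux.SPC]
  exact Nat.card_congr
    { toFun := fun σ => ⟨σ.val.val, σ.val.prop, σ.prop⟩,
      invFun := fun π => ⟨⟨π.val, π.prop.1⟩, π.prop.2⟩,
      left_inv := fun _ => rfl, right_inv := fun _ => rfl }
end
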